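/- arXiv:2410.11599 — 7 statements merged into one kernel-verified Lean document; each statement's English description precedes it below -/
import Mathlib

section
/- Let m ≥ 2, let v ∈ ℤ^m, let 1 ≤ i ≤ m−1, and let w = v·σ_i. Then Δ(w) = Δ(v), d(w) = d(v), and M(w)_{2d(w)} = M(v)_{2d(v)}. Consequently, if v ∼ w (Hurwitz equivalence) then Δ(v) = Δ(w), d(v) = d(w), and M(v)_{2d(v)} = M(w)_{2d(w)}. -/
/-- Alternating sum `Δ(v) = Σ (-1)^i * v i` (0-indexed; `(-1)^(i-1) a_i` in 1-indexed terms). -/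
def Delta {m : ℕ} (v : Fin m → ℤ) : ℤ :=
  ∑ i : Fin m, (-1 : ℤ) ^ (i : ℕ) * v i

/-- `d(v)`: the (nonnegative) gcd of all pairwise differences of the entries of `v`;
for nonempty `v` this equals `gcd {v i - v 0 : i}`. -/
def dgcd {m : ℕ} (v : Fin m → ℤ) : ℤ :=
  Finset.univ.gcd (fun p : Fin m × Fin m => v p.1 - v p.2)

/-- `M(v)_N`: the multiset of residues of the entries of `v` modulo `N`
(for `N = 0` this is the multiset of the entries themselves). -/
def resM {m : ℕ} (v : Fin m → ℤ) (N : ℤ) : Multiset ℤ :=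
  (Finset.univ.val : Multiset (Fin m)).map (fun i => v i % N)

/-- The Hurwitz move `v·σ_i` (0-indexed `i`). -/
def sigmaAct {m : ℕ} (i : Fin (m - 1)) (v : Fin m → ℤ) : Fin m → ℤ :=
  have h : (i : ℕ) < m - 1 := i.isLt
  fun j =>
    if (j : ℕ) = (i : ℕ) then v ⟨(i : ℕ) + 1, by omega⟩
    else if (j : ℕ) = (i : ℕ) + 1 then
      2 * v ⟨(i : ℕ) + 1, by omega⟩ - v ⟨(i : ℕ), by omega⟩
    else v j

/-- The inverse Hurwitz move `v·σ_i⁻¹` (0-indexed `i`). -/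
def sigmaInvAct {m : ℕ} (i : Fin (m - 1)) (v : Fin m → ℤ) : Fin m → ℤ :=
  have h : (i : ℕ) < m - 1 := i.isLt
  fun j =>
    if (j : ℕ) = (i : ℕ) then 2 * v ⟨(i : ℕ), by omega⟩ - v ⟨(i : ℕ) + 1, by omega⟩
    else if (j : ℕ) = (i : ℕ) + 1 then v ⟨(i : ℕ), by omega⟩
    else v j

/-- The virtual move `v·τ_i`: swap the `i`-th and `(i+1)`-st entries (0-indexed `i`). -/
def tauAct {m : ℕ} (i : Fin (m - 1)) (v : Fin m → ℤ) : Fin m → ℤ :=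
  have h : (i : ℕ) < m - 1 := i.isLt
  fun j =>
    if (j : ℕ) = (i : ℕ) then v ⟨(i : ℕ) + 1, by omega⟩
    else if (j : ℕ) = (i : ℕ) + 1 then v ⟨(i : ℕ), by omega⟩
    else v j

/-- Hurwitz equivalence: the equivalence relation on `ℤ^m` generated by `v ∼ v·σ_i`. -/
def HurwitzEquiv {m : ℕ} : (Fin m → ℤ) → (Fin m → ℤ) → Prop :=
  Relation.EqvGen (fun v w => ∃ i : Fin (m - 1), w = sigmaAct i v)

/-- A letter of a braid word: an index `i` and a sign (`true` = `σ_i`, `false` = `σ_i⁻¹`). -/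
abbrev BraidLetter (m : ℕ) := Fin (m - 1) × Bool

/-- Action of a single braid letter. -/
def braidLetterAct {m : ℕ} (l : BraidLetter m) (v : Fin m → ℤ) : Fin m → ℤ :=
  if l.2 then sigmaAct l.1 v else sigmaInvAct l.1 v

/-- Action `v·β` of a braid word (letters applied in order). -/
def braidWordAct {m : ℕ} (β : List (BraidLetter m)) (v : Fin m → ℤ) : Fin m → ℤ :=
  β.foldl (fun w l => braidLetterAct l w) v

/-- The transposition `(i, i+1)` of `Fin m` associated to the index `i`. -/
def letterPerm {m : ℕ} (i : Fin (m - 1)) : Equiv.Perm (Fin m) :=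
  have h : (i : ℕ) < m - 1 := i.isLt
  Equiv.swap ⟨(i : ℕ), by omega⟩ ⟨(i : ℕ) + 1, by omega⟩

/-- The underlying permutation `π_β` of a braid word: the product, composed in
the same order as the letters are applied, of the transpositions `(i, i+1)`. -/
def braidWordPerm {m : ℕ} (β : List (BraidLetter m)) : Equiv.Perm (Fin m) :=
  β.foldl (fun p l => letterPerm l.1 * p) 1

/-- Pure-braid Hurwitz equivalence: related by a braid word with trivial
underlying permutation. -/
def PureEquiv {m : ℕ} (v w : Fin m → ℤ) : Prop :=
  ∃ β : List (BraidLetter m), braidWordAct β v = w ∧ braidWordPerm β = 1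

/-- A letter of a virtual braid word: `(i, none)` = `τ_i`, `(i, some true)` = `σ_i`,
`(i, some false)` = `σ_i⁻¹`. -/
abbrev VBraidLetter (m : ℕ) := Fin (m - 1) × Option Bool

/-- Action of a single virtual braid letter. -/
def vletterAct {m : ℕ} (l : VBraidLetter m) (v : Fin m → ℤ) : Fin m → ℤ :=
  match l.2 with
  | none => tauAct l.1 v
  | some true => sigmaAct l.1 v
  | some false => sigmaInvAct l.1 v

/-- Action `v·β` of a virtual braid word (letters applied in order). -/
def vwordAct {m : ℕ} (β : List (VBraidLetter m)) (v : Fin m → ℤ) : Fin m → ℤ :=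
  β.foldl (fun w l => vletterAct l w) v

/-- The underlying permutation `π_β` of a virtual braid word. -/
def vwordPerm {m : ℕ} (β : List (VBraidLetter m)) : Equiv.Perm (Fin m) :=
  β.foldl (fun p l => letterPerm l.1 * p) 1

/-- Virtual braid equivalence: `w = v·β` for some virtual braid word `β`. -/
def VirtualEquiv {m : ℕ} (v w : Fin m → ℤ) : Prop :=
  ∃ β : List (VBraidLetter m), vwordAct β v = w

/-- Virtual-pure-braid equivalence: related by a virtual braid word with trivial
underlying permutation. -/
def VPureEquiv {m : ℕ} (v w : Fin m → ℤ) : Prop :=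
  ∃ β : List (VBraidLetter m), vwordAct β v = w ∧ vwordPerm β = 1

namespace HurwitzAux

variable {m : ℕ}

lemma dvd_diff (v : Fin m → ℤ) (a b : Fin m) : dgcd v ∣ v a - v b :=
  Finset.gcd_dvd (Finset.mem_univ (a, b))

lemma dgcd_nonneg (v : Fin m → ℤ) : 0 ≤ dgcd v := by
  rw [dgcd, ← Finset.normalize_gcd, ← Int.abs_eq_normalize]
  exact abs_nonneg _

def A (i : Fin (m - 1)) : Fin m := ⟨i, by have := i.isLt; omega⟩
def B (i : Fin (m - 1)) : Fin m := ⟨(i : ℕ) + 1, by have := i.isLt; omega⟩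

lemma A_ne_B (i : Fin (m - 1)) : A i ≠ B i := by
  simp [A, B, Fin.ext_iff]

lemma sig_A (i : Fin (m - 1)) (v : Fin m → ℤ) : sigmaAct i v (A i) = v (B i) := by
  simp [sigmaAct, A, B]

lemma sig_B (i : Fin (m - 1)) (v : Fin m → ℤ) :
    sigmaAct i v (B i) = 2 * v (B i) - v (A i) := by
  simp [sigmaAct, A, B]

lemma sig_other (i : Fin (m - 1)) (v : Fin m → ℤ) (j : Fin m)
    (h1 : j ≠ A i) (h2 : j ≠ B i) : sigmaAct i v j = v j := by
  have h1' : (j : ℕ) ≠ (i : ℕ) := fun h => h1 (Fin.ext h)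
  have h2' : (j : ℕ) ≠ (i : ℕ) + 1 := fun h => h2 (Fin.ext h)
  simp [sigmaAct, h1', h2']

lemma delta_sigma (i : Fin (m - 1)) (v : Fin m → ℤ) :
    Delta (sigmaAct i v) = Delta v := by
  unfold Delta
  rw [← sub_eq_zero, ← Finset.sum_sub_distrib]
  have hsub : ∀ j ∈ Finset.univ, j ∉ ({A i, B i} : Finset (Fin m)) →
      (-1 : ℤ) ^ (j : ℕ) * sigmaAct i v j - (-1) ^ (j : ℕ) * v j = 0 := by
    intro j _ hj
    simp only [Finset.mem_insert, Finset.mem_singleton, not_or] at hj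
    rw [sig_other i v j hj.1 hj.2]
    ring
  rw [← Finset.sum_subset (Finset.subset_univ {A i, B i}) hsub,
    Finset.sum_pair (A_ne_B i), sig_A, sig_B]
  have hB : ((B i : Fin m) : ℕ) = ((A i : Fin m) : ℕ) + 1 := rfl
  rw [hB, pow_succ]
  ring

lemma key_sig (i : Fin (m - 1)) (v : Fin m → ℤ) (j : Fin m) :
    dgcd v ∣ sigmaAct i v j - v j := by
  by_cases h1 : j = A i
  · subst h1; rw [sig_A]; exact dvd_diff v (B i) (A i)
  · by_cases h2 : j = B i
    · subst h2; rw [sig_B]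
      have : 2 * v (B i) - v (A i) - v (B i) = v (B i) - v (A i) := by ring
      rw [this]; exact dvd_diff v (B i) (A i)
    · rw [sig_other i v j h1 h2, sub_self]; exact dvd_zero _

lemma key_sig' (i : Fin (m - 1)) (v : Fin m → ℤ) (j : Fin m) :
    dgcd (sigmaAct i v) ∣ v j - sigmaAct i v j := by
  have hAB : sigmaAct i v (B i) - sigmaAct i v (A i) = v (B i) - v (A i) := by
    rw [sig_A, sig_B]; ring
  by_cases h1 : j = A i
  · subst h1; rw [sig_A]
    have : v (A i) - v (B i) = -(sigmaAct i v (B i) - sigmaAct i v (A i)) := by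
      rw [hAB]; ring
    rw [this]
    exact dvd_neg.mpr (dvd_diff _ (B i) (A i))
  · by_cases h2 : j = B i
    · subst h2; rw [sig_B]
      have : v (B i) - (2 * v (B i) - v (A i)) =
          -(sigmaAct i v (B i) - sigmaAct i v (A i)) := by rw [hAB]; ring
      rw [this]
      exact dvd_neg.mpr (dvd_diff _ (B i) (A i))
    · rw [sig_other i v j h1 h2, sub_self]; exact dvd_zero _

lemma dgcd_sigma (i : Fin (m - 1)) (v : Fin m → ℤ) :
    dgcd (sigmaAct i v) = dgcd v := by
  apply Int.dvd_antisymm (dgcd_nonneg _) (dgcd_nonneg _)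
  · apply Finset.dvd_gcd
    intro p _
    have h1 := key_sig' i v p.1
    have h2 := key_sig' i v p.2
    have hd := dvd_diff (sigmaAct i v) p.1 p.2
    have : v p.1 - v p.2 = (v p.1 - sigmaAct i v p.1) +
        (sigmaAct i v p.1 - sigmaAct i v p.2) - (v p.2 - sigmaAct i v p.2) := by ring
    rw [this]
    exact dvd_sub (dvd_add h1 hd) h2
  · apply Finset.dvd_gcd
    intro p _
    have h1 := key_sig i v p.1
    have h2 := key_sig i v p.2
    have hd := dvd_diff v p.1 p.2
    have : sigmaAct i v p.1 - sigmaAct i v p.2 = (sigmaAct i v p.1 - v p.1) +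
        (v p.1 - v p.2) - (sigmaAct i v p.2 - v p.2) := by ring
    rw [this]
    exact dvd_sub (dvd_add h1 hd) h2

lemma resM_sigma (i : Fin (m - 1)) (v : Fin m → ℤ) :
    resM (sigmaAct i v) (2 * dgcd (sigmaAct i v)) = resM v (2 * dgcd v) := by
  rw [dgcd_sigma]
  set N := 2 * dgcd v with hN
  set π := Equiv.swap (A i) (B i) with hπ
  have hpt : ∀ j : Fin m, sigmaAct i v j % N = v (π j) % N := by
    intro j
    by_cases h1 : j = A i
    · subst h1
      rw [sig_A, hπ, Equiv.swap_apply_left]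
    · by_cases h2 : j = B i
      · subst h2
        rw [sig_B, hπ, Equiv.swap_apply_right]
        have hdvd : N ∣ v (A i) - (2 * v (B i) - v (A i)) := by
          have : v (A i) - (2 * v (B i) - v (A i)) = 2 * (v (A i) - v (B i)) := by ring
          rw [this, hN]
          exact mul_dvd_mul_left 2 (dvd_diff v (A i) (B i))
        exact Int.modEq_iff_dvd.mpr hdvd
      · rw [sig_other i v j h1 h2, hπ, Equiv.swap_apply_of_ne_of_ne h1 h2]
  unfold resM
  have h1 : (Finset.univ.val.map fun j : Fin m => sigmaAct i v j % N) =
      Finset.univ.val.map fun j : Fin m => v (π j) % N := by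
    exact Multiset.map_congr rfl (fun j _ => hpt j)
  rw [h1]
  have h2 : (Finset.univ.val.map fun j : Fin m => v (π j) % N) =
      (Finset.univ.val.map π).map fun j : Fin m => v j % N := by
    rw [Multiset.map_map]; rfl
  have h3 : Finset.univ.val.map ⇑π = Finset.univ.val := by
    have := Finset.map_univ_equiv π
    calc Finset.univ.val.map ⇑π = (Finset.univ.map π.toEmbedding).val := rfl
      _ = Finset.univ.val := by rw [this]
  rw [h2, h3]

end HurwitzAux

/-- a single Hurwitz move `σ_i` preserves `Δ`, `d`, and `M(·)_{2d}`;
consequently so does Hurwitz equivalence. -/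
theorem stmt_1 (m : ℕ) (hm : 2 ≤ m) :
    (∀ (v : Fin m → ℤ) (i : Fin (m - 1)),
      Delta (sigmaAct i v) = Delta v ∧
      dgcd (sigmaAct i v) = dgcd v ∧
      resM (sigmaAct i v) (2 * dgcd (sigmaAct i v)) = resM v (2 * dgcd v)) ∧
    (∀ v w : Fin m → ℤ, HurwitzEquiv v w →
      Delta v = Delta w ∧ dgcd v = dgcd w ∧
      resM v (2 * dgcd v) = resM w (2 * dgcd w)) := by
  constructor
  · intro v i
    exact ⟨HurwitzAux.delta_sigma i v, HurwitzAux.dgcd_sigma i v,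
      HurwitzAux.resM_sigma i v⟩
  · intro v w h
    induction h with
    | rel x y hxy =>
      obtain ⟨i, rfl⟩ := hxy
      exact ⟨(HurwitzAux.delta_sigma i x).symm, (HurwitzAux.dgcd_sigma i x).symm,
        (HurwitzAux.resM_sigma i x).symm⟩
    | refl x => exact ⟨rfl, rfl, rfl⟩
    | symm x y _ ih => exact ⟨ih.1.symm, ih.2.1.symm, ih.2.2.symm⟩
    | trans x y z _ _ ih1 ih2 =>
      exact ⟨ih1.1.trans ih2.1, ih1.2.1.trans ih2.2.1, ih1.2.2.trans ih2.2.2⟩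
end

section
/- Let m ≥ 2 and let v = (a_1,…,a_m), w = (b_1,…,b_m) ∈ ℤ^m satisfy w = v·β for some braid word β on m strands. Then b_{π_β(k)} ≡ a_k (mod 2d(v)) for every k = 1,…,m. (Congruence mod 0 means equality in ℤ.) -/
lemma dgcd_dvd_sub {m : ℕ} (v : Fin m → ℤ) (a b : Fin m) : dgcd v ∣ v a - v b :=
  Finset.gcd_dvd (by simp : (a, b) ∈ (Finset.univ : Finset (Fin m × Fin m)))

lemma step_dvd {m : ℕ} (l : BraidLetter m) (v : Fin m → ℤ) (k : Fin m) :
    2 * dgcd v ∣ braidLetterAct l v (letterPerm l.1 k) - v k := by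
  have hlt : (l.1 : ℕ) < m - 1 := l.1.isLt
  set a : Fin m := ⟨(l.1 : ℕ), by omega⟩ with ha
  set b : Fin m := ⟨(l.1 : ℕ) + 1, by omega⟩ with hb
  have hab : a ≠ b := by simp [ha, hb, Fin.ext_iff]
  rcases eq_or_ne k a with rfl | hka
  · have hswap : letterPerm l.1 a = b := Equiv.swap_apply_left _ _
    rcases l with ⟨i, bb⟩
    rcases bb with _ | _ <;>
      simp only [braidLetterAct, sigmaAct, sigmaInvAct, hswap] <;>
      simp only [hb, ha] <;> norm_num
    have : (2 : ℤ) * v ⟨(i : ℕ) + 1, by omega⟩ - v ⟨(i : ℕ), by omega⟩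
          - v ⟨(i : ℕ), by omega⟩
          = 2 * (v ⟨(i : ℕ) + 1, by omega⟩ - v ⟨(i : ℕ), by omega⟩) := by ring
    rw [this]
    exact mul_dvd_mul_left 2 (dgcd_dvd_sub v _ _)
  · rcases eq_or_ne k b with rfl | hkb
    · have hswap : letterPerm l.1 b = a := Equiv.swap_apply_right _ _
      rcases l with ⟨i, bb⟩
      rcases bb with _ | _ <;>
        simp only [braidLetterAct, sigmaAct, sigmaInvAct, hswap] <;>
        simp only [hb, ha] <;> norm_num
      have : (2 : ℤ) * v ⟨(i : ℕ), by omega⟩ - v ⟨(i : ℕ) + 1, by omega⟩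
            - v ⟨(i : ℕ) + 1, by omega⟩
            = 2 * (v ⟨(i : ℕ), by omega⟩ - v ⟨(i : ℕ) + 1, by omega⟩) := by ring
      rw [this]
      exact mul_dvd_mul_left 2 (dgcd_dvd_sub v _ _)
    · have hswap : letterPerm l.1 k = k := Equiv.swap_apply_of_ne_of_ne hka hkb
      have h1 : (k : ℕ) ≠ (l.1 : ℕ) := fun h => hka (Fin.ext h)
      have h2 : (k : ℕ) ≠ (l.1 : ℕ) + 1 := fun h => hkb (Fin.ext h)
      rcases l with ⟨i, bb⟩
      rcases bb with _ | _ <;>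
        simp [braidLetterAct, sigmaAct, sigmaInvAct, hswap, h1, h2]

lemma dgcd_dvd_step {m : ℕ} (l : BraidLetter m) (v : Fin m → ℤ) :
    dgcd v ∣ dgcd (braidLetterAct l v) := by
  apply Finset.dvd_gcd
  intro p _
  have key : ∀ j : Fin m, dgcd v ∣ braidLetterAct l v j - v (letterPerm l.1 j) := by
    intro j
    have h := step_dvd l v (letterPerm l.1 j)
    rw [show letterPerm l.1 (letterPerm l.1 j) = j from Equiv.swap_apply_self _ _ _] at h
    exact dvd_trans (dvd_mul_left _ 2) h
  have e : braidLetterAct l v p.1 - braidLetterAct l v p.2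
      = (braidLetterAct l v p.1 - v (letterPerm l.1 p.1))
        - (braidLetterAct l v p.2 - v (letterPerm l.1 p.2))
        + (v (letterPerm l.1 p.1) - v (letterPerm l.1 p.2)) := by ring
  rw [e]
  exact dvd_add (dvd_sub (key p.1) (key p.2)) (dgcd_dvd_sub v _ _)

lemma braidWordPerm_foldl {m : ℕ} (β : List (BraidLetter m)) (p : Equiv.Perm (Fin m)) :
    β.foldl (fun q l => letterPerm l.1 * q) p = braidWordPerm β * p := by
  induction β generalizing p with
  | nil => simp [braidWordPerm]
  | cons l β ih =>
    simp only [List.foldl_cons, braidWordPerm]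
    rw [ih, ih (letterPerm l.1 * 1)]
    group

/-- if `w = v·β` for a braid word `β`, then
`b_{π_β(k)} ≡ a_k (mod 2d(v))` for every `k`. -/
theorem stmt_2 (m : ℕ) (hm : 2 ≤ m) (v : Fin m → ℤ) (β : List (BraidLetter m)) :
    ∀ k : Fin m, braidWordAct β v (braidWordPerm β k) ≡ v k [ZMOD 2 * dgcd v] := by
  intro k
  suffices h : 2 * dgcd v ∣ braidWordAct β v (braidWordPerm β k) - v k from
    (Int.modEq_iff_dvd.mpr h).symm
  induction β generalizing v k with
  | nil => simp [braidWordAct, braidWordPerm]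
  | cons l β ih =>
    have hperm : braidWordPerm (l :: β) k = braidWordPerm β (letterPerm l.1 k) := by
      simp only [braidWordPerm, List.foldl_cons]
      rw [braidWordPerm_foldl]
      simp [braidWordPerm]
    have hact : braidWordAct (l :: β) v = braidWordAct β (braidLetterAct l v) := rfl
    rw [hperm, hact]
    set w := braidLetterAct l v
    have h1 : 2 * dgcd v ∣ braidWordAct β w (braidWordPerm β (letterPerm l.1 k))
        - w (letterPerm l.1 k) :=
      dvd_trans (mul_dvd_mul_left 2 (dgcd_dvd_step l v)) (ih w (letterPerm l.1 k))
    have h2 := step_dvd l v k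
    have e : braidWordAct β w (braidWordPerm β (letterPerm l.1 k)) - v k
        = (braidWordAct β w (braidWordPerm β (letterPerm l.1 k)) - w (letterPerm l.1 k))
          + (w (letterPerm l.1 k) - v k) := by ring
    rw [e]
    exact dvd_add h1 h2
end

section
/- Let v = (a_1,a_2,a_3) ∈ ℤ³ and set |v| = max{a_1,a_2,a_3} − min{a_1,a_2,a_3}. If a_1, a_2, a_3 are pairwise distinct, then there exists w ∈ ℤ³ with v ∼ w and |w| < |v|. -/
lemma ev0 (v : Fin 3 → ℤ) : sigmaAct (0 : Fin 2) v = ![v 1, 2*v 1 - v 0, v 2] := by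
  funext j; fin_cases j <;> simp [sigmaAct]
lemma ev1 (v : Fin 3 → ℤ) : sigmaAct (1 : Fin 2) v = ![v 0, v 2, 2*v 2 - v 1] := by
  funext j; fin_cases j <;> simp [sigmaAct]

/-- if the three entries of `v ∈ ℤ³` are pairwise distinct, then `v`
is Hurwitz equivalent to some `w` with `|w| < |v|`, where `|v| = max − min`. -/
theorem stmt_3 (v : Fin 3 → ℤ)
    (h01 : v 0 ≠ v 1) (h02 : v 0 ≠ v 2) (h12 : v 1 ≠ v 2) :
    ∃ w : Fin 3 → ℤ, HurwitzEquiv v w ∧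
      max (max (w 0) (w 1)) (w 2) - min (min (w 0) (w 1)) (w 2) <
      max (max (v 0) (v 1)) (v 2) - min (min (v 0) (v 1)) (v 2) := by
  
  rcases lt_or_gt_of_ne h01 with hab | hab <;>
  rcases lt_or_gt_of_ne h02 with hac | hac <;>
  rcases lt_or_gt_of_ne h12 with hbc | hbc
  · -- a<b, a<c, b<c : case 1
    refine ⟨![v 0, 2*v 1 - v 2, v 1], ?_, ?_⟩
    · refine Relation.EqvGen.symm _ _ (Relation.EqvGen.rel _ _ ⟨1, ?_⟩)
      rw [ev1]; funext j; fin_cases j <;> simp <;> ring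
    · simp; omega
  · -- a<b, a<c, c<b : case 2
    refine ⟨![v 0, v 2, 2*v 2 - v 1], Relation.EqvGen.rel _ _ ⟨1, (ev1 v).symm⟩, ?_⟩
    simp; omega
  · omega
  · -- a<b, c<a : case 5 (c<a<b)
    refine ⟨![2*v 0 - v 1, v 0, v 2], ?_, ?_⟩
    · refine Relation.EqvGen.symm _ _ (Relation.EqvGen.rel _ _ ⟨0, ?_⟩)
      rw [ev0]; funext j; fin_cases j <;> simp <;> ring
    · simp; omega
  · -- b<a, a<c : case 3
    refine ⟨![2*v 0 - v 1, v 0, v 2], ?_, ?_⟩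
    · refine Relation.EqvGen.symm _ _ (Relation.EqvGen.rel _ _ ⟨0, ?_⟩)
      rw [ev0]; funext j; fin_cases j <;> simp <;> ring
    · simp; omega
  · omega
  · -- b<a, c<a, b<c : case 4
    refine ⟨![v 0, v 2, 2*v 2 - v 1], Relation.EqvGen.rel _ _ ⟨1, (ev1 v).symm⟩, ?_⟩
    simp; omega
  · -- c<b<a : case 6
    refine ⟨![v 1, 2*v 1 - v 0, v 2], Relation.EqvGen.rel _ _ ⟨0, (ev0 v).symm⟩, ?_⟩
    simp; omega
end

section
/- Every element v ∈ ℤ³ is Hurwitz equivalent to (x, y, y) for some integers x ≤ y. -/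
private lemma hmove1 (a b c : ℤ) : HurwitzEquiv ![a, b, c] ![b, 2*b - a, c] := by
  apply Relation.EqvGen.rel
  refine ⟨0, ?_⟩
  funext j
  fin_cases j <;> simp [sigmaAct]

private lemma hmove2 (a b c : ℤ) : HurwitzEquiv ![a, b, c] ![a, c, 2*c - b] := by
  apply Relation.EqvGen.rel
  refine ⟨1, ?_⟩
  funext j
  fin_cases j <;> simp [sigmaAct]

private lemma hmove1' (a b c : ℤ) : HurwitzEquiv ![a, b, c] ![2*a - b, a, c] := by
  have h := hmove1 (2*a - b) a c
  have e : (2*a - (2*a - b)) = b := by ring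
  rw [e] at h
  exact Relation.EqvGen.symm _ _ h

private lemma hmove2' (a b c : ℤ) : HurwitzEquiv ![a, b, c] ![a, 2*b - c, b] := by
  have h := hmove2 a (2*b - c) b
  have e : (2*b - (2*b - c)) = c := by ring
  rw [e] at h
  exact Relation.EqvGen.symm _ _ h

private lemma hflip (x y : ℤ) : HurwitzEquiv ![x, y, y] ![x, 2*x - y, 2*x - y] := by
  have s1 := hmove1 x y y
  have s2 := hmove2 y (2*y - x) y
  have e2 : (2*y - (2*y - x)) = x := by ring
  rw [e2] at s2
  have s3 := hmove2 y y x
  have s4 := hmove1 y x (2*x - y)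
  exact Relation.EqvGen.trans _ _ _ s1 (Relation.EqvGen.trans _ _ _ s2
    (Relation.EqvGen.trans _ _ _ s3 s4))

private lemma key : ∀ n : ℕ, ∀ a b c : ℤ,
    (b - a).natAbs + (c - b).natAbs ≤ n →
    ∃ x y : ℤ, HurwitzEquiv ![a, b, c] ![x, y, y] := by
  intro n
  induction n with
  | zero =>
    intro a b c h
    have hb : b = a := by omega
    have hc : c = a := by omega
    rw [hb, hc]
    exact ⟨a, a, Relation.EqvGen.refl _⟩
  | succ n ih =>
    intro a b c h
    by_cases hcb : c = b
    · rw [hcb]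
      exact ⟨a, b, Relation.EqvGen.refl _⟩
    by_cases hba : b = a
    · rw [hba]
      exact ⟨c, 2*c - a, Relation.EqvGen.trans _ _ _ (hmove2 a a c) (hmove1 a c (2*c - a))⟩
    rcases le_or_gt (c - b).natAbs (b - a).natAbs with hle | hlt
    · have hcase : (c - a).natAbs < (b - a).natAbs ∨
          (2*b - c - a).natAbs < (b - a).natAbs := by omega
      rcases hcase with hc1 | hc2
      · obtain ⟨x, y, hxy⟩ := ih a c (2*c - b) (by omega)
        exact ⟨x, y, Relation.EqvGen.trans _ _ _ (hmove2 a b c) hxy⟩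
      · obtain ⟨x, y, hxy⟩ := ih a (2*b - c) b (by omega)
        exact ⟨x, y, Relation.EqvGen.trans _ _ _ (hmove2' a b c) hxy⟩
    · have hcase : (c - (2*b - a)).natAbs < (c - b).natAbs ∨
          (c - a).natAbs < (c - b).natAbs := by omega
      rcases hcase with hc1 | hc2
      · obtain ⟨x, y, hxy⟩ := ih b (2*b - a) c (by omega)
        exact ⟨x, y, Relation.EqvGen.trans _ _ _ (hmove1 a b c) hxy⟩
      · obtain ⟨x, y, hxy⟩ := ih (2*a - b) a c (by omega)
        exact ⟨x, y, Relation.EqvGen.trans _ _ _ (hmove1' a b c) hxy⟩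

/-- every `v ∈ ℤ³` is Hurwitz equivalent to `(x, y, y)` for some `x ≤ y`. -/
theorem stmt_4 (v : Fin 3 → ℤ) :
    ∃ x y : ℤ, x ≤ y ∧ HurwitzEquiv v ![x, y, y] := by
  have hv : v = ![v 0, v 1, v 2] := by
    funext j; fin_cases j <;> rfl
  obtain ⟨x, y, hxy⟩ := key ((v 1 - v 0).natAbs + (v 2 - v 1).natAbs) (v 0) (v 1) (v 2) le_rfl
  rw [← hv] at hxy
  rcases le_or_gt x y with h | h
  · exact ⟨x, y, h, hxy⟩
  · exact ⟨x, 2*x - y, by omega, Relation.EqvGen.trans _ _ _ hxy (hflip x y)⟩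
end

section
/- Let k ≥ 2. Every element v ∈ ℤ^{2k−1} is Hurwitz equivalent to the vector whose first 2p−1 entries equal x and whose remaining 2k−2p entries equal y, for some integers x, y, p with x < y and 1 ≤ p ≤ k. -/
def Step : List ℤ → List ℤ → Prop := fun l l' =>
  ∃ c a b d, l = c ++ a :: b :: d ∧ l' = c ++ b :: (2*b - a) :: d

def LEquiv : List ℤ → List ℤ → Prop := Relation.EqvGen Step

theorem LEquiv.refl (l : List ℤ) : LEquiv l l := Relation.EqvGen.refl l
theorem LEquiv.symm {l l'} (h : LEquiv l l') : LEquiv l' l := Relation.EqvGen.symm _ _ h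
theorem LEquiv.trans {a b c} (h1 : LEquiv a b) (h2 : LEquiv b c) : LEquiv a c :=
  Relation.EqvGen.trans _ _ _ h1 h2
theorem Step.le {l l'} (h : Step l l') : LEquiv l l' := Relation.EqvGen.rel _ _ h

theorem Step.length {l l'} (h : Step l l') : l.length = l'.length := by
  obtain ⟨c,a,b,d,rfl,rfl⟩ := h; simp

theorem LEquiv.length {l l'} (h : LEquiv l l') : l.length = l'.length := by
  induction h with
  | rel _ _ h => exact h.length
  | refl => rfl
  | symm _ _ _ ih => omega
  | trans _ _ _ _ _ ih1 ih2 => omega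

theorem Step.context {l l'} (e f : List ℤ) (h : Step l l') :
    Step (e ++ l ++ f) (e ++ l' ++ f) := by
  obtain ⟨c,a,b,d,rfl,rfl⟩ := h
  exact ⟨e ++ c, a, b, d ++ f, by simp, by simp⟩

theorem LEquiv.context {l l'} (e f : List ℤ) (h : LEquiv l l') :
    LEquiv (e ++ l ++ f) (e ++ l' ++ f) := by
  induction h with
  | rel _ _ h => exact (h.context e f).le
  | refl => exact LEquiv.refl _
  | symm _ _ _ ih => exact ih.symm
  | trans _ _ _ _ _ ih1 ih2 => exact ih1.trans ih2

theorem LEquiv.contextL {l l'} (e : List ℤ) (h : LEquiv l l') :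
    LEquiv (e ++ l) (e ++ l') := by
  have := h.context e []; simpa using this

theorem LEquiv.contextR {l l'} (f : List ℤ) (h : LEquiv l l') :
    LEquiv (l ++ f) (l' ++ f) := by
  have := h.context [] f; simpa using this

theorem step2 (a b : ℤ) (d : List ℤ) : Step (a :: b :: d) (b :: (2*b - a) :: d) :=
  ⟨[], a, b, d, rfl, rfl⟩

/-- translate a leading pair: `[a,b] ~ [a+t*(b-a), b+t*(b-a)]` -/
theorem transPair (a b t : ℤ) (d : List ℤ) :
    LEquiv (a :: b :: d) ((a + t*(b-a)) :: (b + t*(b-a)) :: d) := by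
  induction t using Int.induction_on with
  | zero => simpa using LEquiv.refl _
  | succ n ih =>
      refine ih.trans ?_
      have e1 : a + ((n:ℤ)+1)*(b-a) = b + (n:ℤ)*(b-a) := by push_cast; ring
      have e2 : b + ((n:ℤ)+1)*(b-a) = 2*(b + (n:ℤ)*(b-a)) - (a + (n:ℤ)*(b-a)) := by
        push_cast; ring
      rw [e1, e2]; exact (step2 _ _ d).le
  | pred n ih =>
      refine ih.trans (LEquiv.symm ?_)
      have e1 : a + (-(n:ℤ))*(b-a) = b + (-(n:ℤ)-1)*(b-a) := by push_cast; ring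
      have e2 : b + (-(n:ℤ))*(b-a) = 2*(b + (-(n:ℤ)-1)*(b-a)) - (a + (-(n:ℤ)-1)*(b-a)) := by
        push_cast; ring
      rw [e1, e2]; exact (step2 _ _ d).le

/-- `[E,w,w] ~ [w,w,E]` -/
theorem jump (E w : ℤ) (d : List ℤ) : LEquiv (E :: w :: w :: d) (w :: w :: E :: d) := by
  have h1 := (step2 E w (w :: d)).le
  have h2 : Step (w :: (2*w - E) :: w :: d) (w :: w :: (2*w - (2*w-E)) :: d) :=
    ⟨[w], 2*w - E, w, d, rfl, rfl⟩
  have h2' := h2.le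
  refine h1.trans (h2'.trans ?_)
  have : 2*w - (2*w - E) = E := by ring
  rw [this]
  exact LEquiv.refl _

/-- `[h,w,w] ~ [h,2h-w,2h-w]` -/
theorem reflectPair (h w : ℤ) (d : List ℤ) :
    LEquiv (h :: w :: w :: d) (h :: (2*h-w) :: (2*h-w) :: d) := by
  set z := 2*h - w with hz
  have hw : 2*h - z = w := by rw [hz]; ring
  have sA : Step (z :: z :: h :: d) (z :: h :: (2*h - z) :: d) := ⟨[z], z, h, d, rfl, rfl⟩
  have sB : Step (z :: h :: w :: d) (h :: (2*h - z) :: w :: d) := ⟨[], z, h, w :: d, rfl, rfl⟩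
  rw [hw] at sA
  rw [hw] at sB
  exact (((jump h z d).trans (sA.le.trans sB.le)).symm).symm |>.symm

/-- The full classification of triples: `[a,b,c] ~ [u, u+g, u+g]` with `u = a-b+c`,
`g = gcd` of the differences. -/
theorem tripleAux : ∀ (n : ℕ) (a b c : ℤ), (b-a).natAbs ≤ n → ∀ (d : List ℤ),
    ∃ g : ℤ, 0 ≤ g ∧ g ∣ (b-a) ∧ g ∣ (c-b) ∧ (∀ e : ℤ, e ∣ (b-a) → e ∣ (c-b) → e ∣ g) ∧
      LEquiv (a :: b :: c :: d) ((a-b+c) :: (a-b+c+g) :: (a-b+c+g) :: d) := by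
  intro n
  induction n using Nat.strong_induction_on with
  | _ n IH =>
    intro a b c hn d
    rcases eq_or_ne b a with hba | hba
    · -- A = 0
      subst hba
      rcases lt_trichotomy c b with hc | hc | hc
      · -- c < b : g = b - c, target [c, b, b]
        refine ⟨b - c, by omega, ⟨0, by ring⟩, ⟨-1, by ring⟩, fun e _ h2 => by
          simpa using h2.neg_right, ?_⟩
        have h := (jump c b d).symm
        have e1 : b - b + c = c := by ring
        have e2 : b - b + c + (b - c) = b := by ring
        rw [e2, e1]; exact h
      · -- c = b
        subst hc
        exact ⟨0, le_refl _, ⟨0, by ring⟩, ⟨0, by ring⟩, fun e _ _ => ⟨0, by ring⟩, by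
          have e1 : c - c + c = c := by ring
          rw [e1, add_zero]; exact LEquiv.refl _⟩
      · -- c > b : g = c - b, target [c, 2c-b, 2c-b]
        refine ⟨c - b, by omega, ⟨0, by ring⟩, ⟨1, by ring⟩, fun e _ h2 => by simpa using h2, ?_⟩
        have h1 := (jump c b d).symm
        have h2 := reflectPair c b d
        have e1 : b - b + c = c := by ring
        have e2 : b - b + c + (c - b) = 2*c - b := by ring
        rw [e2, e1]; exact h1.trans h2
    · -- A ≠ 0
      have hA0 : b - a ≠ 0 := sub_ne_zero.mpr (fun h => hba (by omega))
      have hβ : (0:ℤ) < |b - a| := abs_pos.mpr hA0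
      obtain ⟨t, ht⟩ : ∃ t, t * (b - a) = (c - b) - (c - b) % |b - a| := by
        rcases abs_cases (b - a) with ⟨he, _⟩ | ⟨he, _⟩
        · exact ⟨(c - b) / |b - a|, by rw [Int.emod_def, he]; ring⟩
        · exact ⟨-((c - b) / |b - a|), by rw [Int.emod_def, he]; ring⟩
      set r := (c - b) % |b - a| with hrdef
      have hr0 : 0 ≤ r := Int.emod_nonneg _ (ne_of_gt hβ)
      have hrlt : r < |b - a| := Int.emod_lt_of_pos _ hβ
      have hchain1 : LEquiv (a :: b :: c :: d)
          ((a + t*(b-a)) :: (b + t*(b-a)) :: c :: d) := transPair a b t _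
      rcases eq_or_ne r 0 with hz | hz
      · -- terminal case
        have hceq : c = b + t*(b-a) := by omega
        rw [hceq] at hchain1
        have hdvd2 : ∀ e : ℤ, e ∣ b - a → e ∣ c - b := by
          intro e he
          have h1 : c - b = t*(b-a) := by omega
          rw [h1]; exact he.mul_left t
        rcases lt_or_gt_of_ne hA0 with hneg | hpos
        · refine ⟨a - b, by omega, ⟨-1, by ring⟩, hdvd2 _ ⟨-1, by ring⟩,
            fun e he _ => by rw [show a-b = -(b-a) by ring]; exact dvd_neg.mpr he, ?_⟩
          rw [show a-b+c+(a-b) = 2*(a + t*(b-a)) - (b + t*(b-a)) by omega,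
            show a-b+c = a + t*(b-a) by omega, hceq]
          exact hchain1.trans (reflectPair _ _ d)
        · refine ⟨b - a, by omega, ⟨1, by ring⟩, hdvd2 _ ⟨1, by ring⟩, fun e he _ => he, ?_⟩
          rw [show a-b+c+(b-a) = b + t*(b-a) by omega,
            show a-b+c = a + t*(b-a) by omega, hceq]
          exact hchain1
      · -- recursive case
        obtain ⟨s, hs⟩ : ∃ s, s * r = (b - a) % r - (b - a) :=
          ⟨-((b-a)/r), by rw [Int.emod_def]; ring⟩
        have hchain2 : LEquiv ((b + t*(b-a)) :: c :: d)
            ((b + t*(b-a) + s*r) :: (c + s*r) :: d) := by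
          have h := transPair (b + t*(b-a)) c s d
          have hr' : c - (b + t*(b-a)) = r := by omega
          rw [hr'] at h
          exact h
        have hchain2' := hchain2.contextL [a + t*(b-a)]
        simp only [List.cons_append, List.nil_append] at hchain2'
        have hAnn : 0 ≤ (b-a) % r := Int.emod_nonneg _ hz
        have hAlt : (b-a) % r < r := Int.emod_lt_of_pos _ (by omega)
        have hA'' : (b + t*(b-a) + s*r) - (a + t*(b-a)) = (b - a) % r := by omega
        have hmeas : ((b + t*(b-a) + s*r) - (a + t*(b-a))).natAbs < n := by
          rw [hA'']
          have h1 : ((b-a) % r).natAbs < (|b - a|).natAbs :=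
            Int.natAbs_lt_natAbs_of_nonneg_of_lt hAnn (by omega)
          rw [Int.natAbs_abs] at h1
          omega
        obtain ⟨g, hg0, hg1, hg2, hchar, hle⟩ :=
          IH _ hmeas (a + t*(b-a)) (b + t*(b-a) + s*r) (c + s*r) le_rfl d
        have e1 : (c + s*r) - (b + t*(b-a) + s*r) = r := by omega
        rw [e1] at hg2
        have hda : g ∣ b - a := by
          have h := dvd_sub hg1 (hg2.mul_left s)
          rwa [show (b + t*(b-a) + s*r) - (a + t*(b-a)) - s*r = b - a by ring] at h
        refine ⟨g, hg0, hda, ?_, ?_, ?_⟩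
        · have h := dvd_add (hda.mul_left t) hg2
          rwa [show t*(b-a) + r = c - b by omega] at h
        · intro e he1 he2
          have her : e ∣ r := by
            have h := dvd_sub he2 (he1.mul_left t)
            rwa [show c - b - t*(b-a) = r by omega] at h
          refine hchar e ?_ ?_
          · have h := dvd_add he1 (her.mul_left s)
            rwa [show b - a + s*r = (b + t*(b-a) + s*r) - (a + t*(b-a)) by ring] at h
          · rwa [e1]
        · have hu : (a + t*(b-a)) - (b + t*(b-a) + s*r) + (c + s*r) = a - b + c := by ring
          rw [hu] at hle
          exact hchain1.trans (hchain2'.trans hle)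

theorem triple (a b c : ℤ) (d : List ℤ) :
    ∃ g : ℤ, 0 ≤ g ∧ g ∣ (b-a) ∧ g ∣ (c-b) ∧ (∀ e : ℤ, e ∣ (b-a) → e ∣ (c-b) → e ∣ g) ∧
      LEquiv (a :: b :: c :: d) ((a-b+c) :: (a-b+c+g) :: (a-b+c+g) :: d) :=
  tripleAux (b-a).natAbs a b c le_rfl d

/-- duplicate every element -/
def expand : List ℤ → List ℤ
  | [] => []
  | v :: P => v :: v :: expand P

@[simp] theorem expand_nil : expand [] = [] := rfl
@[simp] theorem expand_cons (v : ℤ) (P : List ℤ) : expand (v :: P) = v :: v :: expand P := rfl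

theorem expand_append (P Q : List ℤ) : expand (P ++ Q) = expand P ++ expand Q := by
  induction P with
  | nil => rfl
  | cons v P ih => simp [ih]

@[simp] theorem expand_length (P : List ℤ) : (expand P).length = 2 * P.length := by
  induction P with
  | nil => rfl
  | cons v P ih => simp [ih]; omega

theorem jumpAcross (P : List ℤ) (E : ℤ) (d : List ℤ) :
    LEquiv (E :: (expand P ++ d)) (expand P ++ (E :: d)) := by
  induction P generalizing d with
  | nil => exact LEquiv.refl _
  | cons v P ih =>
      simp only [expand_cons, List.cons_append]
      have h1 := jump E v (expand P ++ d)
      have h2 := (ih d).contextL [v, v]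
      simp only [List.cons_append, List.nil_append] at h2
      exact h1.trans h2

theorem pairAcross (P : List ℤ) (q : ℤ) (d : List ℤ) :
    LEquiv (q :: q :: (expand P ++ d)) (expand P ++ (q :: q :: d)) := by
  have h1 := (jumpAcross P q d).contextL [q]
  simp only [List.cons_append, List.nil_append] at h1
  have h2 := jumpAcross P q (q :: d)
  exact h1.trans h2

theorem pairSwap (p q : ℤ) (d : List ℤ) :
    LEquiv (p :: p :: q :: q :: d) (q :: q :: p :: p :: d) := by
  have h1 := (jump p q d).contextL [p]
  simp only [List.cons_append, List.nil_append] at h1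
  exact h1.trans (jump p q (p :: d))

/-- reflect the 4th/5th pair about `u+g` (in standard layout). -/
theorem reflectZ (u g v : ℤ) (d : List ℤ) :
    LEquiv (u :: (u+g) :: (u+g) :: v :: v :: d)
      (u :: (u+g) :: (u+g) :: (2*(u+g)-v) :: (2*(u+g)-v) :: d) := by
  have h := (reflectPair (u+g) v d).contextL [u, u+g]
  simpa using h

/-- reflect the 4th/5th pair about `u` (in standard layout). -/
theorem reflectU (u z v : ℤ) (d : List ℤ) :
    LEquiv (u :: z :: z :: v :: v :: d) (u :: z :: z :: (2*u-v) :: (2*u-v) :: d) := by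
  have h1 := (pairSwap z v (d)).contextL [u]
  simp only [List.cons_append, List.nil_append] at h1
  have h2 := reflectPair u v (z :: z :: d)
  have h3 := (pairSwap (2*u-v) z (d)).contextL [u]
  simp only [List.cons_append, List.nil_append] at h3
  exact (h1.trans h2).trans h3

theorem canonAux : ∀ (n : ℕ) (u g k : ℤ), 0 < g → k.natAbs ≤ n →
    ∃ c : ℤ, (c = u ∨ c = u + g) ∧ ∀ (d : List ℤ),
      LEquiv (u :: (u+g) :: (u+g) :: (u+k*g) :: (u+k*g) :: d)
        (u :: (u+g) :: (u+g) :: c :: c :: d) := by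
  intro n
  induction n using Nat.strong_induction_on with
  | _ n IH =>
    intro u g k hg hk
    rcases eq_or_ne k 0 with rfl | hk0
    · exact ⟨u, Or.inl rfl, fun d => by rw [show u + 0*g = u by ring]; exact LEquiv.refl _⟩
    rcases eq_or_ne k 1 with rfl | hk1
    · exact ⟨u + g, Or.inr rfl, fun d => by rw [show u + 1*g = u + g by ring]; exact LEquiv.refl _⟩
    rcases eq_or_ne k (-1) with rfl | hkm
    · refine ⟨u + g, Or.inr rfl, fun d => ?_⟩
      have h := reflectU u (u+g) (u + (-1)*g) d
      rw [show 2*u - (u + (-1)*g) = u + g by ring] at h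
      exact h
    rcases lt_or_gt_of_ne hk0 with hneg | hpos
    · -- k ≤ -2 : shift up by 2
      obtain ⟨c, hc, hle⟩ := IH (k+2).natAbs (by omega) u g (k+2) hg le_rfl
      refine ⟨c, hc, fun d => ?_⟩
      have h1 := reflectU u (u+g) (u + k*g) d
      have h2 := reflectZ u g (2*u - (u + k*g)) d
      rw [show 2*(u+g) - (2*u - (u + k*g)) = u + (k+2)*g by ring] at h2
      exact (h1.trans h2).trans (hle d)
    · -- k ≥ 2 : shift down by 2
      obtain ⟨c, hc, hle⟩ := IH (k-2).natAbs (by omega) u g (k-2) hg le_rfl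
      refine ⟨c, hc, fun d => ?_⟩
      have h1 := reflectZ u g (u + k*g) d
      have h2 := reflectU u (u+g) (2*(u+g) - (u + k*g)) d
      rw [show 2*u - (2*(u+g) - (u + k*g)) = u + (k-2)*g by ring] at h2
      exact (h1.trans h2).trans (hle d)

theorem canon (u g k : ℤ) (hg : 0 < g) :
    ∃ c : ℤ, (c = u ∨ c = u + g) ∧ ∀ (d : List ℤ),
      LEquiv (u :: (u+g) :: (u+g) :: (u+k*g) :: (u+k*g) :: d)
        (u :: (u+g) :: (u+g) :: c :: c :: d) :=
  canonAux k.natAbs u g k hg le_rfl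

theorem c5 (u p q : ℤ) (d : List ℤ) :
    ∃ g b : ℤ, 0 ≤ g ∧ g ∣ (p - u) ∧ g ∣ (q - u) ∧
      (∀ e : ℤ, e ∣ (p - u) → e ∣ (q - u) → e ∣ g) ∧ (b = u ∨ b = u + g) ∧
      LEquiv (u :: p :: p :: q :: q :: d) (u :: (u+g) :: (u+g) :: b :: b :: d) := by
  by_cases hdeg : p = u ∧ q = u
  · refine ⟨0, u, le_refl _, ⟨0, by rw [hdeg.1]; ring⟩, ⟨0, by rw [hdeg.2]; ring⟩,
      fun e _ _ => ⟨0, by ring⟩, Or.inl rfl, ?_⟩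
    rw [hdeg.1, hdeg.2, show u + 0 = u by ring]
    exact LEquiv.refl _
  -- step 1 : [u,p,p,q,q] ~ [u,p,2p-q,p,q]
  have h1 : LEquiv (u :: p :: p :: q :: q :: d) (u :: p :: (2*p-q) :: p :: q :: d) := by
    have h := (transPair p q (-1) (q :: d)).contextL [u, p]
    simp only [List.cons_append, List.nil_append] at h
    rw [show p + (-1)*(q-p) = 2*p - q by ring, show q + (-1)*(q-p) = p by ring] at h
    exact h
  -- step 2 : triple on (u, p, 2p-q)
  obtain ⟨g2, hg2nn, hg2a, hg2b, hg2char, hle2⟩ := triple u p (2*p-q) (p :: q :: d)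
  rw [show u - p + (2*p-q) = u + p - q by ring] at hle2
  -- step 3 : triple on (u+p-q+g2, p, q)
  obtain ⟨g3, hg3nn, hg3a, hg3b, hg3char, hle3⟩ := triple (u+p-q+g2) p q d
  have hle3' := hle3.contextL [u+p-q, u+p-q+g2]
  simp only [List.cons_append, List.nil_append] at hle3'
  rw [show u+p-q+g2 - p + q = u + g2 by ring] at hle3'
  -- step 4 : triple on (u+p-q, u+p-q+g2, u+g2)
  obtain ⟨g4, hg4nn, hg4a, hg4b, hg4char, hle4⟩ :=
    triple (u+p-q) (u+p-q+g2) (u+g2) ((u+g2+g3) :: (u+g2+g3) :: d)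
  rw [show u+p-q - (u+p-q+g2) + (u+g2) = u by ring] at hle4
  rw [show u+p-q+g2 - (u+p-q) = g2 by ring] at hg4a hg4char
  rw [show u+g2 - (u+p-q+g2) = q - p by ring] at hg4b hg4char
  rw [show (2*p-q) - p = p - q by ring] at hg2b hg2char
  rw [show p - (u+p-q+g2) = q - u - g2 by ring] at hg3a hg3char
  rw [show q - p = q - p by ring] at hg3b
  -- divisibility facts
  have hPU : g4 ∣ p - u := hg4a.trans hg2a
  have hQU : g4 ∣ q - u := by
    have h := dvd_add hg4b hPU
    rwa [show q - p + (p - u) = q - u by ring] at h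
  have hG3 : g4 ∣ g3 := by
    refine hg3char g4 ?_ hg4b
    exact dvd_sub hQU hg4a
  have hchar : ∀ e : ℤ, e ∣ p - u → e ∣ q - u → e ∣ g4 := by
    intro e he1 he2
    have hpq : e ∣ p - q := by
      have h := dvd_sub he1 he2
      rwa [show p - u - (q - u) = p - q by ring] at h
    refine hg4char e (hg2char e he1 hpq) ?_
    have := hpq.neg_right
    rwa [show -(p-q) = q - p by ring] at this
  have hg4pos : 0 < g4 := by
    rcases eq_or_ne g4 0 with h0 | h0
    · exfalso
      rw [h0] at hg4a hg4b
      have h2 : g2 = 0 := zero_dvd_iff.mp hg4a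
      have hqp : q = p := by have := zero_dvd_iff.mp hg4b; omega
      rw [h2] at hg2a
      have : p = u := by have := zero_dvd_iff.mp hg2a; omega
      exact hdeg ⟨this, by omega⟩
    · omega
  -- canonize the tail pair
  have hz3 : g4 ∣ g2 + g3 := dvd_add hg4a hG3
  obtain ⟨k, hk⟩ := hz3
  have hkk : u + g2 + g3 = u + k * g4 := by rw [mul_comm] at hk; omega
  obtain ⟨c, hc, hcle'⟩ := canon u g4 k hg4pos
  have hcle := hcle' d
  rw [← hkk] at hcle
  exact ⟨g4, c, hg4nn, hPU, hQU, hchar, hc,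
    (((h1.trans hle2).trans hle3').trans hle4).trans hcle⟩

theorem expandReplicate (n : ℕ) (x : ℤ) :
    expand (List.replicate n x) = List.replicate (2*n) x := by
  induction n with
  | zero => rfl
  | succ n ih => simp only [List.replicate_succ, expand_cons, ih,
      show 2*(n+1) = (2*n+1)+1 by omega]

theorem repAbsorb (n : ℕ) (x : ℤ) (X : List ℤ) :
    List.replicate n x ++ x :: X = List.replicate (n+1) x ++ X := by
  induction n with
  | zero => rfl
  | succ n ih => simp only [List.replicate_succ, List.cons_append, ih]

theorem sortList : ∀ (W : List ℤ) (u w : ℤ), (∀ v ∈ W, v = u ∨ v = w) →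
    ∃ α β : ℕ, α + β = W.length ∧
      LEquiv (u :: expand W) (List.replicate (2*α+1) u ++ List.replicate (2*β) w) := by
  intro W
  induction W with
  | nil => intro u w _; exact ⟨0, 0, rfl, by simp; exact LEquiv.refl _⟩
  | cons v W' ih =>
    intro u w hmem
    obtain ⟨α', β', hsum, hle⟩ := ih u w (fun x hx => hmem x (List.mem_cons_of_mem _ hx))
    -- move v² to the back
    have h1 : LEquiv (u :: expand (v :: W')) (u :: (expand W' ++ [v, v])) := by
      have h := (pairAcross W' v []).contextL [u]
      simpa using h
    have h2 : LEquiv (u :: (expand W' ++ [v, v]))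
        ((List.replicate (2*α'+1) u ++ List.replicate (2*β') w) ++ [v, v]) := by
      have h := hle.contextR [v, v]
      simpa using h
    rcases hmem v List.mem_cons_self with rfl | rfl
    · -- v = u : bring it home over the w-pairs
      refine ⟨α' + 1, β', by simp at hsum ⊢; omega, ?_⟩
      refine (h1.trans h2).trans ?_
      have h3 : LEquiv (List.replicate (2*β') w ++ [v, v]) (v :: v :: List.replicate (2*β') w) := by
        have h := (pairAcross (List.replicate β' w) v []).symm
        rw [expandReplicate] at h
        simpa using h
      have h4 := h3.contextL (List.replicate (2*α'+1) v)
      rw [List.append_assoc]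
      refine h4.trans ?_
      rw [repAbsorb, repAbsorb, show 2*α'+1+1+1 = 2*(α'+1)+1 by omega]
      exact LEquiv.refl _
    · -- v = w
      refine ⟨α', β' + 1, by simp at hsum ⊢; omega, ?_⟩
      refine (h1.trans h2).trans ?_
      rw [List.append_assoc, show ([v,v] : List ℤ) = v :: [v] by rfl,
        repAbsorb, repAbsorb]
      simp only [List.append_nil, show 2*β'+1+1 = 2*(β'+1) by omega]
      exact LEquiv.refl _

theorem canonList : ∀ (W : List ℤ) (u g : ℤ), 0 < g → (∀ v ∈ W, g ∣ v - u) →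
    ∃ W' : List ℤ, W'.length = W.length ∧ (∀ v ∈ W', v = u ∨ v = u + g) ∧
      ∀ X : List ℤ, LEquiv (u :: (u+g) :: (u+g) :: (expand W ++ X))
        (u :: (u+g) :: (u+g) :: (expand W' ++ X)) := by
  intro W
  induction W with
  | nil => exact fun u g _ _ => ⟨[], rfl, by simp, fun X => LEquiv.refl _⟩
  | cons v Wt ih =>
    intro u g hg hdvd
    obtain ⟨k, hk⟩ := hdvd v List.mem_cons_self
    obtain ⟨c, hc, hcle⟩ := canon u g k hg
    obtain ⟨W', hlen, hmem, hW⟩ := ih u g hg (fun x hx => hdvd x (List.mem_cons_of_mem _ hx))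
    refine ⟨W' ++ [c], by simp [hlen], ?_, ?_⟩
    · intro x hx
      rcases List.mem_append.mp hx with h | h
      · exact hmem x h
      · simp at h; subst h; exact hc
    · intro X
      have hv : v = u + k * g := by rw [mul_comm] at hk; omega
      have h1 : LEquiv (u :: (u+g) :: (u+g) :: (expand (v :: Wt) ++ X))
          (u :: (u+g) :: (u+g) :: c :: c :: (expand Wt ++ X)) := by
        rw [hv]; exact hcle (expand Wt ++ X)
      -- move c² to the back of Wt
      have h2 : LEquiv (c :: c :: (expand Wt ++ X)) (expand Wt ++ (c :: c :: X)) :=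
        pairAcross Wt c X
      have h2' := h2.contextL [u, u+g, u+g]
      simp only [List.cons_append, List.nil_append] at h2'
      have h3 := hW (c :: c :: X)
      -- reassemble : expand W' ++ c :: c :: X = expand (W' ++ [c]) ++ X
      have h4 : expand (W' ++ [c]) ++ X = expand W' ++ (c :: c :: X) := by
        rw [expand_append]; simp
      rw [h4]
      exact (h1.trans h2').trans h3

theorem repSplit (n : ℕ) (x : ℤ) :
    List.replicate (2*n+1) x = x :: expand (List.replicate n x) := by
  rw [expandReplicate]; rfl

theorem mp : ∀ (L : List ℤ) (u : ℤ), ∃ (α β : ℕ) (G : ℤ),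
    α + β = L.length ∧ (1 ≤ β → 1 ≤ G) ∧
    LEquiv (u :: expand L)
      (List.replicate (2*α+1) u ++ List.replicate (2*β) (u+G)) := by
  intro L
  induction L with
  | nil =>
      intro u
      exact ⟨0, 0, 1, rfl, by omega, by simp; exact LEquiv.refl _⟩
  | cons q L' ih =>
    intro u
    obtain ⟨α', β', G', hsum, himp, hle⟩ := ih u
    have h0 : LEquiv (u :: expand (q :: L')) (u :: (expand L' ++ [q, q])) := by
      have h := (pairAcross L' q []).contextL [u]
      simpa using h
    have h1 : LEquiv (u :: expand (q :: L'))
        ((List.replicate (2*α'+1) u ++ List.replicate (2*β') (u+G')) ++ [q, q]) := by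
      refine h0.trans ?_
      have h := hle.contextR [q, q]
      simpa using h
    by_cases hmerge : q = u + G' ∧ 1 ≤ β'
    · -- direct merge
      refine ⟨α', β' + 1, G', by simp at hsum ⊢; omega, fun _ => himp hmerge.2, ?_⟩
      refine h1.trans ?_
      rw [hmerge.1, List.append_assoc, show ([u+G', u+G'] : List ℤ) = (u+G') :: (u+G') :: [] from rfl,
        repAbsorb, repAbsorb, show 2*β'+1+1 = 2*(β'+1) by omega]
      simp only [List.append_nil]
      exact LEquiv.refl _
    by_cases hqu : q = u
    · -- absorb into the u-block
      refine ⟨α' + 1, β', G', by simp at hsum ⊢; omega, himp, ?_⟩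
      rw [hqu] at h1
      rw [hqu]
      refine h1.trans ?_
      have h3 : LEquiv (List.replicate (2*β') (u+G') ++ [u, u])
          (u :: u :: List.replicate (2*β') (u+G')) := by
        have h := (pairAcross (List.replicate β' (u+G')) u []).symm
        rw [expandReplicate] at h
        simpa using h
      have h4 := h3.contextL (List.replicate (2*α'+1) u)
      rw [List.append_assoc]
      refine h4.trans ?_
      rw [repAbsorb, repAbsorb, show 2*α'+1+1+1 = 2*(α'+1)+1 by omega]
      exact LEquiv.refl _
    · -- the interesting case
      rcases Nat.eq_zero_or_pos β' with hβ0 | hβpos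
      · -- β' = 0
        subst hβ0
        simp only [Nat.mul_zero, List.replicate_zero, List.append_nil] at h1
        rcases Nat.eq_zero_or_pos α' with hα0 | hαpos
        · -- α' = 0 : bare triple
          subst hα0
          obtain ⟨g, hgnn, hga, _, _, hle5⟩ := triple u q q []
          rw [show u - q + q = u by ring] at hle5
          have hg1 : 1 ≤ g := by
            rcases eq_or_ne g 0 with h0 | h0
            · exfalso; rw [h0] at hga; exact hqu (by have := zero_dvd_iff.mp hga; omega)
            · omega
          refine ⟨0, 1, g, by simp [hsum.symm], fun _ => hg1, ?_⟩
          refine h1.trans ?_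
          simpa using hle5
        · -- α' ≥ 1 : c5 against the u-block
          have hrw : List.replicate (2*α'+1) u ++ [q, q]
              = u :: (expand (List.replicate α' u) ++ [q, q]) := by
            rw [repSplit]; rfl
          have h2 : LEquiv (u :: (expand (List.replicate α' u) ++ [q, q]))
              (u :: q :: q :: expand (List.replicate α' u)) := by
            have h := ((pairAcross (List.replicate α' u) q []).symm).contextL [u]
            simpa using h
          have hα : List.replicate α' u = u :: List.replicate (α'-1) u := by
            rw [← List.replicate_succ]; congr 1; omega
          obtain ⟨g, b, hgnn, hga, hgb, hchar, hb, hcle⟩ :=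
            c5 u q u (expand (List.replicate (α'-1) u))
          have hg1 : 1 ≤ g := by
            rcases eq_or_ne g 0 with h0 | h0
            · exfalso; rw [h0] at hga; exact hqu (by have := zero_dvd_iff.mp hga; omega)
            · omega
          obtain ⟨α, β, hαβ, hsle⟩ := sortList ((u+g) :: b :: List.replicate (α'-1) u) u (u+g)
            (by
              intro v hv
              rcases List.mem_cons.mp hv with rfl | hv
              · right; rfl
              rcases List.mem_cons.mp hv with rfl | hv
              · exact hb
              · left; exact List.eq_of_mem_replicate hv)
          refine ⟨α, β, g, by simp at hαβ hsum ⊢; omega, fun _ => hg1, ?_⟩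
          refine h1.trans ?_
          rw [hrw]
          refine h2.trans ?_
          rw [hα]
          simp only [expand_cons]
          refine hcle.trans ?_
          simpa using hsle
      · -- β' ≥ 1 : c5 against the (u+G')-block
        have hqz : q ≠ u + G' := fun h => hmerge ⟨h, hβpos⟩
        have hG1 : 1 ≤ G' := himp hβpos
        have hβ : List.replicate β' (u+G') = (u+G') :: List.replicate (β'-1) (u+G') := by
          rw [← List.replicate_succ]; congr 1; omega
        -- rewrite state into u :: z :: z :: q :: q :: expand P
        have hstate : (List.replicate (2*α'+1) u ++ List.replicate (2*β') (u+G')) ++ [q, q]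
            = u :: ((expand (List.replicate α' u) ++
                ((u+G') :: (u+G') :: expand (List.replicate (β'-1) (u+G')))) ++ [q, q]) := by
          rw [repSplit, show List.replicate (2*β') (u+G') = expand (List.replicate β' (u+G')) from
            (expandReplicate _ _).symm, hβ]
          simp
        have hA : LEquiv (u :: ((expand (List.replicate α' u) ++
                ((u+G') :: (u+G') :: expand (List.replicate (β'-1) (u+G')))) ++ [q, q]))
            (u :: (u+G') :: (u+G') :: ((expand (List.replicate α' u) ++
                expand (List.replicate (β'-1) (u+G'))) ++ [q, q])) := by
          have h := ((pairAcross (List.replicate α' u) (u+G')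
            (expand (List.replicate (β'-1) (u+G')) ++ [q, q])).symm).contextL [u]
          simpa [List.append_assoc] using h
        have hB : LEquiv (u :: (u+G') :: (u+G') :: ((expand (List.replicate α' u) ++
                expand (List.replicate (β'-1) (u+G'))) ++ [q, q]))
            (u :: (u+G') :: (u+G') :: q :: q ::
              expand (List.replicate α' u ++ List.replicate (β'-1) (u+G'))) := by
          have h := ((pairAcross (List.replicate α' u ++ List.replicate (β'-1) (u+G')) q []).symm).contextL
            [u, u+G', u+G']
          simpa [expand_append, List.append_assoc] using h
        -- bring the z-pair before the q-pair : swap q-pair and z-pair? no, c5 wants (u, z, z, q, q)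
        obtain ⟨g, b, hgnn, hga, hgb, hchar, hb, hcle'⟩ :=
          c5 u (u+G') q (expand (List.replicate α' u ++ List.replicate (β'-1) (u+G')))
        have hg1 : 1 ≤ g := by
          rcases eq_or_ne g 0 with h0 | h0
          · exfalso; rw [h0] at hga
            have := zero_dvd_iff.mp hga; omega
          · omega
        -- canonize the remaining pairs
        have hdvdall : ∀ v ∈ (b :: (List.replicate α' u ++ List.replicate (β'-1) (u+G'))),
            g ∣ v - u := by
          intro v hv
          rcases List.mem_cons.mp hv with rfl | hv
          · rcases hb with rfl | rfl
            · simp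
            · simp
          · rcases List.mem_append.mp hv with h | h
            · rw [List.eq_of_mem_replicate h]; simp
            · rw [List.eq_of_mem_replicate h]; simpa using hga
        obtain ⟨W', hWlen, hWmem, hWle⟩ :=
          canonList (b :: (List.replicate α' u ++ List.replicate (β'-1) (u+G'))) u g hg1 hdvdall
        obtain ⟨α, β, hαβ, hsle⟩ := sortList ((u+g) :: W') u (u+g)
          (by
            intro v hv
            rcases List.mem_cons.mp hv with rfl | hv
            · right; rfl
            · exact hWmem v hv)
        refine ⟨α, β, g, ?_, fun _ => hg1, ?_⟩
        · simp at hαβ hWlen hsum ⊢; omega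
        · refine h1.trans ?_
          rw [hstate]
          refine (hA.trans hB).trans ?_
          refine hcle'.trans ?_
          have h5 := hWle []
          simp only [List.append_nil, expand_cons] at h5
          refine h5.trans ?_
          simpa using hsle

theorem pairForm : ∀ (j : ℕ) (l : List ℤ), l.length = 2*j+1 →
    ∃ (u : ℤ) (P : List ℤ), P.length = j ∧ LEquiv l (u :: expand P) := by
  intro j
  induction j with
  | zero =>
      intro l hl
      match l, hl with
      | [a], _ => exact ⟨a, [], rfl, LEquiv.refl _⟩
  | succ j ih =>
      intro l hl
      match l, hl with
      | E :: F :: l'', hl =>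
        obtain ⟨u'', P'', hP, hle⟩ := ih l'' (by simp at hl; omega)
        obtain ⟨g, hgnn, _, _, _, hle3⟩ := triple E F u'' (expand P'')
        refine ⟨E - F + u'', (E - F + u'' + g) :: P'', by simp [hP], ?_⟩
        have h1 := hle.contextL [E, F]
        simp only [List.cons_append, List.nil_append] at h1
        exact h1.trans hle3

/-- Main list-level theorem -/
theorem mainList (j : ℕ) (hj : 1 ≤ j) (l : List ℤ) (hl : l.length = 2*j+1) :
    ∃ (α β : ℕ) (u G : ℤ), α + β = j ∧ (1 ≤ β → 1 ≤ G) ∧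
      LEquiv l (List.replicate (2*α+1) u ++ List.replicate (2*β) (u+G)) := by
  obtain ⟨u, P, hP, hle⟩ := pairForm j l hl
  obtain ⟨α, β, G, hsum, himp, hmp⟩ := mp P u
  exact ⟨α, β, u, G, by omega, himp, hle.trans hmp⟩


theorem getElem_mid1 (c : List ℤ) (x y : ℤ) (d : List ℤ) :
    (c ++ x :: y :: d)[c.length]'(by simp only [List.length_append, List.length_cons]; omega) = x := by
  induction c with
  | nil => rfl
  | cons e c ih => simpa using ih

theorem getElem_mid2 (c : List ℤ) (x y : ℤ) (d : List ℤ) :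
    (c ++ x :: y :: d)[c.length + 1]'(by simp only [List.length_append, List.length_cons]; omega) = y := by
  induction c with
  | nil => rfl
  | cons e c ih => simpa using ih

theorem getElem_off (c : List ℤ) (x y x' y' : ℤ) (d : List ℤ) :
    ∀ (j : ℕ) (hj : j < (c ++ x :: y :: d).length) (hj' : j < (c ++ x' :: y' :: d).length),
    j ≠ c.length → j ≠ c.length + 1 →
    (c ++ x :: y :: d)[j]'hj = (c ++ x' :: y' :: d)[j]'hj' := by
  induction c with
  | nil =>
      intro j hj hj' h1 h2
      match j with
      | 0 => exact absurd rfl h1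
      | 1 => exact absurd rfl h2
      | (n+2) => simp
  | cons e c ih =>
      intro j hj hj' h1 h2
      match j with
      | 0 => simp
      | (n+1) =>
          simp only [List.cons_append, List.getElem_cons_succ]
          exact ih n (by simp at hj ⊢; omega) (by simp at hj' ⊢; omega)
            (by simp at h1 ⊢; omega) (by simp at h2 ⊢; omega)

theorem bridge {m : ℕ} {l l' : List ℤ} (h : LEquiv l l') :
    ∀ (v w : Fin m → ℤ), List.ofFn v = l → List.ofFn w = l' → HurwitzEquiv v w := by
  induction h with
  | rel l l' hstep =>
      intro v w hv hw
      obtain ⟨c, a, b, d, rfl, rfl⟩ := hstep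
      have hm : m = c.length + 2 + d.length := by
        have h2 := congrArg List.length hv
        simp at h2
        omega
      have hvj : ∀ (jn : ℕ) (hj : jn < m),
          v ⟨jn, hj⟩ = (c ++ a :: b :: d)[jn]'(by simp only [List.length_append, List.length_cons]; omega) := by
        intro jn hj
        have e1 : (List.ofFn v)[jn]'(by simpa using hj) = v ⟨jn, hj⟩ := by simp
        rw [← e1]
        exact List.getElem_of_eq hv _
      have hwj : ∀ (jn : ℕ) (hj : jn < m),
          w ⟨jn, hj⟩ = (c ++ b :: (2*b-a) :: d)[jn]'(by simp only [List.length_append, List.length_cons]; omega) := by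
        intro jn hj
        have e1 : (List.ofFn w)[jn]'(by simpa using hj) = w ⟨jn, hj⟩ := by simp
        rw [← e1]
        exact List.getElem_of_eq hw _
      refine Relation.EqvGen.rel v w ⟨⟨c.length, by omega⟩, ?_⟩
      funext j
      rcases j with ⟨jn, hj⟩
      simp only [sigmaAct]
      by_cases h1 : jn = c.length
      · subst h1
        simp only [if_pos rfl]
        rw [hwj _ hj, hvj _ (by omega)]
        rw [getElem_mid1, getElem_mid2]
        simp
      · by_cases h2 : jn = c.length + 1
        · subst h2
          simp only [if_neg (by omega : ¬ c.length + 1 = c.length), if_pos rfl]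
          rw [hwj _ hj, hvj _ (by omega), hvj _ (by omega)]
          rw [getElem_mid1, getElem_mid2, getElem_mid2]
          simp
        · simp only [if_neg (by simpa using h1), if_neg (by simpa using h2)]
          rw [hwj _ hj, hvj _ hj]
          exact (getElem_off c a b b (2*b-a) d jn (by simp; omega) (by simp; omega) h1 h2).symm
  | refl l =>
      intro v w hv hw
      have : v = w := List.ofFn_inj.mp (hv.trans hw.symm)
      rw [this]
      exact Relation.EqvGen.refl w
  | symm x y _ ih =>
      intro v w hv hw
      exact Relation.EqvGen.symm _ _ (ih w v hw hv)
  | trans x y z hxy _ ih1 ih2 =>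
      intro v w hv hw
      have hylen : y.length = m := by
        have h1 := LEquiv.length hxy
        have h2 : x.length = m := by rw [← hv]; simp
        omega
      set v'' : Fin m → ℤ := fun i => y[(i : ℕ)]'(by omega) with hv''
      have hofn : List.ofFn v'' = y := by
        apply List.ext_getElem (by simp [hylen])
        intro i h1 h2
        simp [hv'']
      exact Relation.EqvGen.trans _ _ _ (ih1 v v'' hv hofn) (ih2 v'' w hofn hw)

theorem ofFnIf (m s : ℕ) (hs : s ≤ m) (x y : ℤ) :
    List.ofFn (fun j : Fin m => if (j : ℕ) < s then x else y)
      = List.replicate s x ++ List.replicate (m - s) y := by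
  apply List.ext_getElem (by simp; omega)
  intro i h1 h2
  simp only [List.getElem_ofFn]
  by_cases h : i < s
  · rw [if_pos h]
    rw [List.getElem_append_left (by simpa using h)]
    simp
  · rw [if_neg h]
    rw [List.getElem_append_right (by simpa using h)]
    simp

/-- for `k ≥ 2`, every `v ∈ ℤ^{2k−1}` is Hurwitz equivalent to a vector
with first `2p−1` entries `x` and remaining `2k−2p` entries `y`, for some `x < y`
and `1 ≤ p ≤ k`. -/
theorem stmt_5 (k : ℕ) (hk : 2 ≤ k) (v : Fin (2 * k - 1) → ℤ) :
    ∃ (x y : ℤ) (p : ℕ), x < y ∧ 1 ≤ p ∧ p ≤ k ∧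
      HurwitzEquiv v (fun j => if (j : ℕ) < 2 * p - 1 then x else y) := by
  have hlen : (List.ofFn v).length = 2*(k-1)+1 := by simp; omega
  obtain ⟨α, β, u, G, hsum, himp, hle⟩ := mainList (k-1) (by omega) (List.ofFn v) hlen
  rcases Nat.eq_zero_or_pos β with hβ | hβ
  · -- constant case
    subst hβ
    refine ⟨u, u+1, k, by omega, by omega, le_refl _, ?_⟩
    refine bridge hle v _ rfl ?_
    rw [ofFnIf _ _ (by omega)]
    rw [show 2*k-1 - (2*k-1) = 0 by omega, show 2*k-1 = 2*α+1 by omega]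
    simp
  · refine ⟨u, u+G, α+1, by have := himp hβ; omega, by omega, by omega, ?_⟩
    refine bridge hle v _ rfl ?_
    rw [ofFnIf _ _ (by omega)]
    rw [show 2*(α+1)-1 = 2*α+1 by omega, show 2*k-1 - (2*α+1) = 2*β by omega]
end

section
/- For two elements v, w ∈ ℤ³, v ∼ w (Hurwitz equivalence) if and only if Δ(v) = Δ(w) and d(v) = d(w). -/
def enc (a x y : ℤ) : Fin 3 → ℤ := ![a, a+x, a+y]

@[simp] lemma enc0 (a x y : ℤ) : enc a x y 0 = a := rfl
@[simp] lemma enc1 (a x y : ℤ) : enc a x y 1 = a + x := rfl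
@[simp] lemma enc2 (a x y : ℤ) : enc a x y 2 = a + y := rfl

lemma enc_self (v : Fin 3 → ℤ) : v = enc (v 0) (v 1 - v 0) (v 2 - v 0) := by
  funext j; fin_cases j <;> simp [enc]

lemma sigma0 (a x y : ℤ) : sigmaAct (0 : Fin 2) (enc a x y) = enc (a+x) x (y-x) := by
  funext j; fin_cases j <;> simp [sigmaAct, enc] <;> ring

lemma sigma1 (a x y : ℤ) : sigmaAct (1 : Fin 2) (enc a x y) = enc a y (2*y-x) := by
  funext j; fin_cases j <;> simp [sigmaAct, enc] <;> ring

open Relation in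
lemma HurwitzEquiv.refl (v : Fin 3 → ℤ) : HurwitzEquiv v v := Relation.EqvGen.refl v
lemma HurwitzEquiv.symm {v w : Fin 3 → ℤ} (h : HurwitzEquiv v w) : HurwitzEquiv w v := Relation.EqvGen.symm _ _ h
lemma HurwitzEquiv.trans {u v w : Fin 3 → ℤ} (h : HurwitzEquiv u v) (h' : HurwitzEquiv v w) : HurwitzEquiv u w := Relation.EqvGen.trans _ _ _ h h'

lemma move1 (a x y : ℤ) : HurwitzEquiv (enc a x y) (enc (a+x) x (y-x)) :=
  Relation.EqvGen.rel _ _ ⟨0, (sigma0 a x y).symm⟩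

lemma move2 (a x y : ℤ) : HurwitzEquiv (enc a x y) (enc a y (2*y-x)) :=
  Relation.EqvGen.rel _ _ ⟨1, (sigma1 a x y).symm⟩

lemma move1' (a x y : ℤ) : HurwitzEquiv (enc a x y) (enc (a-x) x (y+x)) := by
  have := (move1 (a-x) x (y+x)).symm
  simpa using this

lemma move2' (a x y : ℤ) : HurwitzEquiv (enc a x y) (enc a (2*x-y) x) := by
  have := (move2 a (2*x-y) x).symm
  have h : 2*x - (2*x-y) = y := by ring
  rwa [h] at this

lemma move1n (n : ℕ) (a x y : ℤ) : HurwitzEquiv (enc a x y) (enc (a+n*x) x (y-n*x)) := by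
  induction n with
  | zero => simpa using HurwitzEquiv.refl (enc a x y)
  | succ k ih =>
    refine ih.trans ?_
    have := move1 (a+k*x) x (y-k*x)
    have e1 : a + (k:ℤ)*x + x = a + (k+1:ℕ)*x := by push_cast; ring
    have e2 : y - (k:ℤ)*x - x = y - (k+1:ℕ)*x := by push_cast; ring
    rwa [e1, e2] at this

lemma move1z (k : ℤ) (a x y : ℤ) : HurwitzEquiv (enc a x y) (enc (a+k*x) x (y-k*x)) := by
  rcases le_or_gt 0 k with h | h
  · obtain ⟨n, rfl⟩ := Int.eq_ofNat_of_zero_le h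
    exact move1n n a x y
  · obtain ⟨n, hn⟩ : ∃ n : ℕ, k = -(n:ℤ) := ⟨k.natAbs, by omega⟩
    subst hn
    have := (move1n n (a - n*x) x (y + n*x)).symm
    have e1 : a - (n:ℤ)*x + n*x = a := by ring
    have e2 : y + (n:ℤ)*x - n*x = y := by ring
    rw [e1, e2] at this
    have e3 : a + (-(n:ℤ))*x = a - n*x := by ring
    have e4 : y - (-(n:ℤ))*x = y + n*x := by ring
    rw [e3, e4]
    exact this

lemma Delta_enc (a x y : ℤ) : Delta (enc a x y) = a - x + y := by
  simp [Delta, Fin.sum_univ_three]; ring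

lemma gcd_congr {x y z w : ℤ} (h1 : (Int.gcd x y : ℤ) ∣ z) (h2 : (Int.gcd x y : ℤ) ∣ w)
    (h3 : (Int.gcd z w : ℤ) ∣ x) (h4 : (Int.gcd z w : ℤ) ∣ y) : Int.gcd x y = Int.gcd z w :=
  Nat.dvd_antisymm
    (Int.natCast_dvd_natCast.mp (Int.dvd_coe_gcd h1 h2))
    (Int.natCast_dvd_natCast.mp (Int.dvd_coe_gcd h3 h4))

lemma dgcd_enc (a x y : ℤ) : dgcd (enc a x y) = Int.gcd x y := by
  have h1 : (Int.gcd x y : ℤ) ∣ dgcd (enc a x y) := by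
    apply Finset.dvd_gcd
    intro p _
    obtain ⟨p1, p2⟩ := p
    fin_cases p1 <;> fin_cases p2 <;> simp [enc] <;>
      first
      | exact dvd_sub (Int.gcd_dvd_left x y) (Int.gcd_dvd_right x y)
      | exact dvd_sub (Int.gcd_dvd_right x y) (Int.gcd_dvd_left x y)
      | simpa using Int.gcd_dvd_left x y
      | simpa using Int.gcd_dvd_right x y
      | simpa using (Int.gcd_dvd_left (a := x) (b := y)).neg_right
      | exact (Int.gcd_dvd_left x y).neg
      | exact (Int.gcd_dvd_right x y).neg
  have h2 : dgcd (enc a x y) ∣ (Int.gcd x y : ℤ) := by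
    have hx : dgcd (enc a x y) ∣ x := by
      have := Finset.gcd_dvd (f := fun p : Fin 3 × Fin 3 => enc a x y p.1 - enc a x y p.2)
        (Finset.mem_univ ((1 : Fin 3), (0 : Fin 3)))
      simpa [dgcd, enc] using this
    have hy : dgcd (enc a x y) ∣ y := by
      have := Finset.gcd_dvd (f := fun p : Fin 3 × Fin 3 => enc a x y p.1 - enc a x y p.2)
        (Finset.mem_univ ((2 : Fin 3), (0 : Fin 3)))
      simpa [dgcd, enc] using this
    exact Int.dvd_coe_gcd hx hy
  have hnn : 0 ≤ dgcd (enc a x y) := by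
    rw [dgcd, ← Finset.normalize_gcd, ← Int.abs_eq_normalize]
    exact abs_nonneg _
  exact Int.dvd_antisymm hnn (by positivity) h2 h1

lemma gcdA (x y : ℤ) : Int.gcd x (y - x) = Int.gcd x y := by
  refine gcd_congr (Int.gcd_dvd_left _ _) ?_ (Int.gcd_dvd_left _ _)
    (dvd_sub (Int.gcd_dvd_right _ _) (Int.gcd_dvd_left _ _))
  have := dvd_add (Int.gcd_dvd_right (a := x) (b := y - x)) (Int.gcd_dvd_left (a := x) (b := y - x))
  simpa using this

lemma gcdB (x y : ℤ) : Int.gcd y (2*y - x) = Int.gcd x y := by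
  refine gcd_congr ?_ (Int.gcd_dvd_left _ _) (Int.gcd_dvd_right _ _)
    (dvd_sub (Dvd.dvd.mul_left (Int.gcd_dvd_right _ _) 2) (Int.gcd_dvd_left _ _))
  have := dvd_sub (Dvd.dvd.mul_left (Int.gcd_dvd_left (a := y) (b := 2*y - x)) 2)
    (Int.gcd_dvd_right (a := y) (b := 2*y - x))
  simpa using this

lemma gcdC (y z : ℤ) : Int.gcd y (z % y) = Int.gcd y z := by
  refine gcd_congr (Int.gcd_dvd_left _ _) ?_ (Int.gcd_dvd_left _ _) ?_
  · have h : z = z % y + y * (z / y) := by rw [Int.emod_def]; ring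
    conv_rhs => rw [h]
    exact dvd_add (Int.gcd_dvd_right _ _) (Dvd.dvd.mul_right (Int.gcd_dvd_left _ _) _)
  · rw [Int.emod_def]
    exact dvd_sub (Int.gcd_dvd_right _ _) (Dvd.dvd.mul_right (Int.gcd_dvd_left _ _) _)

lemma delta_equiv {v w : Fin 3 → ℤ} (h : HurwitzEquiv v w) : Delta v = Delta w := by
  induction h with
  | rel v w hr =>
    obtain ⟨i, rfl⟩ := hr
    rw [enc_self v]
    fin_cases i
    · show Delta (enc (v 0) (v 1 - v 0) (v 2 - v 0))
        = Delta (sigmaAct 0 (enc (v 0) (v 1 - v 0) (v 2 - v 0)))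
      rw [sigma0, Delta_enc, Delta_enc]; ring
    · show Delta (enc (v 0) (v 1 - v 0) (v 2 - v 0))
        = Delta (sigmaAct 1 (enc (v 0) (v 1 - v 0) (v 2 - v 0)))
      rw [sigma1, Delta_enc, Delta_enc]; ring
  | refl v => rfl
  | symm _ _ _ ih => exact ih.symm
  | trans _ _ _ _ _ ih1 ih2 => exact ih1.trans ih2

lemma dgcd_equiv {v w : Fin 3 → ℤ} (h : HurwitzEquiv v w) : dgcd v = dgcd w := by
  induction h with
  | rel v w hr =>
    obtain ⟨i, rfl⟩ := hr
    rw [enc_self v]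
    fin_cases i
    · show dgcd (enc (v 0) (v 1 - v 0) (v 2 - v 0))
        = dgcd (sigmaAct 0 (enc (v 0) (v 1 - v 0) (v 2 - v 0)))
      rw [sigma0, dgcd_enc, dgcd_enc, gcdA]
    · show dgcd (enc (v 0) (v 1 - v 0) (v 2 - v 0))
        = dgcd (sigmaAct 1 (enc (v 0) (v 1 - v 0) (v 2 - v 0)))
      rw [sigma1, dgcd_enc, dgcd_enc, gcdB]
  | refl v => rfl
  | symm _ _ _ ih => exact ih.symm
  | trans _ _ _ _ _ ih1 ih2 => exact ih1.trans ih2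

lemma key0 (x a : ℤ) : ∃ a', HurwitzEquiv (enc a x 0) (enc a' ((Int.gcd x 0 : ℤ)) 0) := by
  rcases le_or_gt 0 x with hx | hx
  · refine ⟨a, ?_⟩
    have hg : (Int.gcd x 0 : ℤ) = x := by
      rw [Int.gcd_zero_right]; exact Int.natAbs_of_nonneg hx
    rw [hg]
    exact HurwitzEquiv.refl _
  · refine ⟨a + 2*(-x), ?_⟩
    have hg : (Int.gcd x 0 : ℤ) = -x := by
      rw [Int.gcd_zero_right]; omega
    rw [hg]
    have s1 := move2 a x 0
    rw [show 2*0 - x = -x by ring] at s1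
    have s2 := move2 a 0 (-x)
    rw [show 2*(-x) - 0 = -(2*x) by ring] at s2
    have s3 := move1z 2 a (-x) (-(2*x))
    rw [show -(2*x) - 2*(-x) = 0 by ring] at s3
    exact s1.trans (s2.trans s3)

lemma keyrec : ∀ n : ℕ, ∀ y x a : ℤ, y.natAbs ≤ n →
    ∃ a', HurwitzEquiv (enc a x y) (enc a' ((Int.gcd x y : ℤ)) 0) := by
  intro n
  induction n with
  | zero =>
    intro y x a hy
    have : y = 0 := by omega
    subst this
    exact key0 x a
  | succ n ih =>
    intro y x a hy
    rcases eq_or_ne y 0 with rfl | hy0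
    · exact key0 x a
    · set z := 2*y - x with hz
      set q := z / y with hq
      set r := z % y with hr
      have s1 := move2 a x y
      have s2 := move1z q a y z
      have hrz : z - q*y = r := by rw [hr, hq, Int.emod_def]; ring
      rw [hrz] at s2
      have hlt : r.natAbs < y.natAbs := by
        have h1 : 0 ≤ r := Int.emod_nonneg z hy0
        have h2 : r < |y| := Int.emod_lt_abs z hy0
        have h3 : |y| = (y.natAbs : ℤ) := Int.abs_eq_natAbs y
        omega
      obtain ⟨a', h⟩ := ih r y (a + q*y) (by omega)
      refine ⟨a', ?_⟩
      have hgcd : Int.gcd y r = Int.gcd x y := by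
        rw [hr, gcdC, hz, gcdB]
      rw [hgcd] at h
      exact s1.trans (s2.trans h)

lemma key_s8 (x y a : ℤ) : ∃ a', HurwitzEquiv (enc a x y) (enc a' ((Int.gcd x y : ℤ)) 0) :=
  keyrec y.natAbs y x a le_rfl

theorem stmt_8_aux (v w : Fin 3 → ℤ) :
    HurwitzEquiv v w ↔ Delta v = Delta w ∧ dgcd v = dgcd w := by
  constructor
  · intro h
    exact ⟨delta_equiv h, dgcd_equiv h⟩
  · rintro ⟨hD, hG⟩
    obtain ⟨a1, h1⟩ := key_s8 (v 1 - v 0) (v 2 - v 0) (v 0)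
    obtain ⟨a2, h2⟩ := key_s8 (w 1 - w 0) (w 2 - w 0) (w 0)
    rw [← enc_self v] at h1
    rw [← enc_self w] at h2
    have hg1 : dgcd v = (Int.gcd (v 1 - v 0) (v 2 - v 0) : ℤ) := by
      conv_lhs => rw [enc_self v, dgcd_enc]
    have hg2 : dgcd w = (Int.gcd (w 1 - w 0) (w 2 - w 0) : ℤ) := by
      conv_lhs => rw [enc_self w, dgcd_enc]
    have hgeq : (Int.gcd (v 1 - v 0) (v 2 - v 0) : ℤ) = (Int.gcd (w 1 - w 0) (w 2 - w 0) : ℤ) := by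
      rw [← hg1, ← hg2, hG]
    have hd1 := delta_equiv h1
    have hd2 := delta_equiv h2
    rw [Delta_enc] at hd1 hd2
    have haeq : a1 = a2 := by
      have := hd1.symm.trans (hD.trans hd2)
      rw [hgeq] at this
      omega
    rw [haeq, hgeq] at h1
    exact h1.trans h2.symm


/-- for `v, w ∈ ℤ³`, `v ∼ w` iff `Δ(v) = Δ(w)` and `d(v) = d(w)`. -/
theorem stmt_8 (v w : Fin 3 → ℤ) :
    HurwitzEquiv v w ↔ Delta v = Delta w ∧ dgcd v = dgcd w := by
  exact stmt_8_aux v w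
end

section
/- Let k ≥ 2 and let v ∈ ℤ^{2k}. The following are equivalent: (i) there exist integers x, y and 0 ≤ p ≤ 2k such that v is Hurwitz equivalent to the vector with p entries x followed by 2k−p entries y; (ii) Δ(v) ∈ {0, d(v), −d(v)}. Moreover, v is Hurwitz equivalent to such a vector with both p and 2k−p even if and only if Δ(v) = 0. -/
namespace S12

/-! ### pairs and alternating sum on lists -/

def pairs : List ℤ → List ℤ
  | [] => []
  | a :: t => a :: a :: pairs t

@[simp] lemma pairs_nil : pairs [] = [] := rfl
@[simp] lemma pairs_cons (a : ℤ) (t : List ℤ) : pairs (a :: t) = a :: a :: pairs t := rfl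

lemma pairs_append (s t : List ℤ) : pairs (s ++ t) = pairs s ++ pairs t := by
  induction s with
  | nil => simp
  | cons a s ih => simp [ih]

lemma pairs_replicate (n : ℕ) (a : ℤ) :
    pairs (List.replicate n a) = List.replicate (2*n) a := by
  induction n with
  | zero => simp
  | succ n ih =>
    rw [List.replicate_succ, pairs_cons, ih, show 2*(n+1) = (2*n)+1+1 by ring,
      List.replicate_succ, List.replicate_succ]

@[simp] lemma mem_pairs (a : ℤ) (s : List ℤ) : a ∈ pairs s ↔ a ∈ s := by
  induction s with
  | nil => simp [pairs]
  | cons b s ih => simp [ih]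

@[simp] lemma length_pairs (s : List ℤ) : (pairs s).length = 2 * s.length := by
  induction s with
  | nil => simp [pairs]
  | cons b s ih => simp [ih]; ring

def DeltaL : List ℤ → ℤ
  | [] => 0
  | a :: t => a - DeltaL t

@[simp] lemma DeltaL_nil : DeltaL [] = 0 := rfl
@[simp] lemma DeltaL_cons (a : ℤ) (t : List ℤ) : DeltaL (a :: t) = a - DeltaL t := rfl

lemma DeltaL_append (xs ys : List ℤ) :
    DeltaL (xs ++ ys) = DeltaL xs + (-1)^xs.length * DeltaL ys := by
  induction xs with
  | nil => simp
  | cons a xs ih => simp [ih, pow_succ]; ring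

lemma DeltaL_pairs_append (s t : List ℤ) : DeltaL (pairs s ++ t) = DeltaL t := by
  induction s with
  | nil => simp
  | cons a s ih => simpa using ih

/-! ### list-level Hurwitz moves -/

def HStep (l l' : List ℤ) : Prop :=
  ∃ xs a b ys, l = xs ++ a :: b :: ys ∧ l' = xs ++ b :: (2*b - a) :: ys

def HL : List ℤ → List ℤ → Prop := Relation.EqvGen HStep

lemma HL.refl (l : List ℤ) : HL l l := Relation.EqvGen.refl l

lemma HL.symm {l l' : List ℤ} (h : HL l l') : HL l' l := Relation.EqvGen.symm _ _ h

lemma HL.trans {l₁ l₂ l₃ : List ℤ} (h : HL l₁ l₂) (h' : HL l₂ l₃) : HL l₁ l₃ :=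
  Relation.EqvGen.trans _ _ _ h h'

lemma HL.gen (xs : List ℤ) (a b : ℤ) (ys : List ℤ) :
    HL (xs ++ a :: b :: ys) (xs ++ b :: (2*b - a) :: ys) :=
  Relation.EqvGen.rel _ _ ⟨xs, a, b, ys, rfl, rfl⟩

lemma HL.cast {l1 l2 l1' l2' : List ℤ} (h : HL l1 l2) (e1 : l1 = l1') (e2 : l2 = l2') :
    HL l1' l2' := e1 ▸ e2 ▸ h

lemma HL.congr {l l' : List ℤ} (h : HL l l') (p q : List ℤ) :
    HL (p ++ l ++ q) (p ++ l' ++ q) := by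
  induction h with
  | rel x y hxy =>
    obtain ⟨xs, a, b, ys, rfl, rfl⟩ := hxy
    have := HL.gen (p ++ xs) a b (ys ++ q)
    simpa using this
  | refl x => exact HL.refl _
  | symm x y _ ih => exact ih.symm
  | trans x y z _ _ ih ih' => exact ih.trans ih'

lemma HL.congr_cons {l l' : List ℤ} (h : HL l l') (a : ℤ) : HL (a :: l) (a :: l') := by
  have := h.congr [a] []
  simpa using this

lemma HL.congr_cons2 {l l' : List ℤ} (h : HL l l') (a b : ℤ) :
    HL (a :: b :: l) (a :: b :: l') := (h.congr_cons b).congr_cons a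

lemma HL.congr_pre {l l' : List ℤ} (h : HL l l') (p : List ℤ) : HL (p ++ l) (p ++ l') := by
  have := h.congr p []
  simpa using this

lemma HStep.length {l l' : List ℤ} (h : HStep l l') : l.length = l'.length := by
  obtain ⟨xs, a, b, ys, rfl, rfl⟩ := h; simp

lemma HL.length {l l' : List ℤ} (h : HL l l') : l.length = l'.length := by
  induction h with
  | rel x y hxy => exact hxy.length
  | refl x => rfl
  | symm x y _ ih => omega
  | trans x y z _ _ ih ih' => omega

lemma HL.deltaL {l l' : List ℤ} (h : HL l l') : DeltaL l = DeltaL l' := by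
  induction h with
  | rel x y hxy =>
    obtain ⟨xs, a, b, ys, rfl, rfl⟩ := hxy
    rw [DeltaL_append, DeltaL_append]
    simp; ring
  | refl x => rfl
  | symm x y _ ih => omega
  | trans x y z _ _ ih ih' => omega

/-- common divisors of all pairwise differences are preserved -/
lemma HL.dvd_iff {l l' : List ℤ} (h : HL l l') (e : ℤ) :
    (∀ a ∈ l, ∀ b ∈ l, e ∣ a - b) ↔ (∀ a ∈ l', ∀ b ∈ l', e ∣ a - b) := by
  induction h with
  | rel x y hxy =>
    obtain ⟨xs, a, b, ys, rfl, rfl⟩ := hxy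
    constructor
    · intro H c hc d hd
      have key : ∀ c ∈ xs ++ b :: (2*b-a) :: ys, e ∣ c - b := by
        intro c hc
        simp only [List.mem_append, List.mem_cons] at hc
        have hb : b ∈ xs ++ a :: b :: ys := by simp
        have ha : a ∈ xs ++ a :: b :: ys := by simp
        rcases hc with hc | rfl | rfl | hc
        · exact H c (by simp [hc]) b hb
        · simp
        · have := H b hb a ha
          have : e ∣ 2*b - a - b := by
            have h2 : (2*b - a - b) = b - a := by ring
            rw [h2]; exact this
          exact this
        · exact H c (by simp [hc]) b hb
      have h1 := key c hc
      have h2 := key d hd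
      have : c - d = (c - b) - (d - b) := by ring
      rw [this]; exact dvd_sub h1 h2
    · intro H c hc d hd
      have key : ∀ c ∈ xs ++ a :: b :: ys, e ∣ c - b := by
        intro c hc
        simp only [List.mem_append, List.mem_cons] at hc
        have hb : b ∈ xs ++ b :: (2*b-a) :: ys := by simp
        have ha : (2*b - a) ∈ xs ++ b :: (2*b-a) :: ys := by simp
        rcases hc with hc | hca | hcb | hc
        · exact H c (by simp [hc]) b hb
        · have h0 := H b hb (2*b-a) ha
          have h2 : b - (2*b-a) = a - b := by ring
          rw [hca, ← h2]; exact h0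
        · rw [hcb]; simp
        · exact H c (by simp [hc]) b hb
      have h1 := key c hc
      have h2 := key d hd
      have : c - d = (c - b) - (d - b) := by ring
      rw [this]; exact dvd_sub h1 h2
  | refl x => rfl
  | symm x y _ ih => exact ih.symm
  | trans x y z _ _ ih ih' => exact ih.trans ih'


/-! ### concrete moves -/

lemma g1 (a b : ℤ) (R : List ℤ) : HL (a :: b :: R) (b :: (2*b - a) :: R) := by
  have := HL.gen [] a b R; simpa using this

lemma g1' (a b : ℤ) (R : List ℤ) : HL (a :: b :: R) ((2*a - b) :: a :: R) := by
  have := g1 (2*a - b) a R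
  rw [show 2*a - (2*a - b) = b by ring] at this
  exact this.symm

/-- translate the first pair: `σ₁ᵗ`. -/
lemma moveA (t : ℤ) (a b : ℤ) (R : List ℤ) :
    HL (a :: b :: R) ((a + t*(b - a)) :: (b + t*(b - a)) :: R) := by
  induction t using Int.induction_on with
  | zero => simpa using HL.refl (a :: b :: R)
  | succ t ih =>
    refine ih.trans ?_
    refine (g1 (a + t*(b-a)) (b + t*(b-a)) R).cast rfl ?_
    simp only [List.cons.injEq]
    exact ⟨by ring, by ring, trivial⟩
  | pred t ih =>
    refine ih.trans ?_
    refine (g1' (a + (-t)*(b-a)) (b + (-t)*(b-a)) R).cast rfl ?_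
    simp only [List.cons.injEq]
    exact ⟨by ring, by ring, trivial⟩

/-- translate the pair in positions 2,3: `σ₂ᵗ`. -/
lemma moveB (t : ℤ) (a b c : ℤ) (R : List ℤ) :
    HL (a :: b :: c :: R) (a :: (b + t*(c - b)) :: (c + t*(c - b)) :: R) :=
  (moveA t b c R).congr_cons a

/-- slide an equal pair -/
lemma slide (a b : ℤ) (R : List ℤ) : HL (a :: b :: b :: R) (b :: b :: a :: R) := by
  have h1 := g1 a b (b :: R)
  have h2 := (g1 (2*b - a) b R).congr_cons b
  rw [show 2*b - (2*b - a) = a by ring] at h2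
  exact h1.trans h2

/-- reflect a pair (on the right) through a single on its left -/
lemma reflR (c y : ℤ) (R : List ℤ) :
    HL (c :: y :: y :: R) (c :: (2*c - y) :: (2*c - y) :: R) := by
  have h1 := moveA 1 c y (y :: R)
  rw [show c + 1*(y-c) = y by ring, show y + 1*(y-c) = 2*y - c by ring] at h1
  have h2 := moveB 2 y (2*y - c) y R
  rw [show 2*y - c + 2*(y - (2*y-c)) = c by ring,
      show y + 2*(y - (2*y-c)) = 2*c - y by ring] at h2
  have h3 := moveA 1 y c ((2*c - y) :: R)
  rw [show y + 1*(c - y) = c by ring, show c + 1*(c-y) = 2*c - y by ring] at h3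
  exact (h1.trans h2).trans h3

/-- reflect a pair (on the left) through a single on its right -/
lemma reflL (y c : ℤ) (R : List ℤ) :
    HL (y :: y :: c :: R) ((2*c - y) :: (2*c - y) :: c :: R) := by
  refine ((slide c y R).symm.trans ?_)
  exact (reflR c y R).trans (slide c (2*c - y) R)

/-- a pair slides right past two singles -/
lemma slide2 (u s1 s2 : ℤ) (R : List ℤ) :
    HL (u :: u :: s1 :: s2 :: R) (s1 :: s2 :: u :: u :: R) := by
  refine (slide s1 u (s2 :: R)).symm.trans ?_
  exact ((slide s2 u R).symm.congr_cons s1)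

/-- a block of pairs slides right past two singles -/
lemma slideBlock (w : List ℤ) (s1 s2 : ℤ) (R : List ℤ) :
    HL (pairs w ++ s1 :: s2 :: R) (s1 :: s2 :: (pairs w ++ R)) := by
  induction w with
  | nil => simpa using HL.refl _
  | cons u w ih =>
    have h1 : HL (u :: u :: (pairs w ++ s1 :: s2 :: R)) (u :: u :: (s1 :: s2 :: (pairs w ++ R))) :=
      ih.congr_cons2 u u
    refine (by simpa using h1 : HL (pairs (u::w) ++ s1 :: s2 :: R) _).trans ?_
    exact slide2 u s1 s2 (pairs w ++ R)

/-- translate the pair sitting just left of two singles by `2*t*(c2-c1)` -/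
lemma translatePair (t : ℤ) (y c1 c2 : ℤ) (R : List ℤ) :
    HL (y :: y :: c1 :: c2 :: R)
       ((y + 2*t*(c2-c1)) :: (y + 2*t*(c2-c1)) :: c1 :: c2 :: R) := by
  induction t using Int.induction_on with
  | zero => simpa using HL.refl _
  | succ t ih =>
    refine ih.trans ?_
    set z := y + 2*t*(c2-c1) with hz
    have h1 := reflL z c1 (c2 :: R)
    have h2 := (slide c1 (2*c1 - z) (c2 :: R)).symm
    have h3 := ((reflL (2*c1 - z) c2 R).congr_cons c1)
    have h4 := slide c1 (2*c2 - (2*c1 - z)) (c2 :: R)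
    have hcomp := ((h1.trans h2).trans h3).trans h4
    rw [show 2*c2 - (2*c1 - z) = y + 2*(t+1)*(c2-c1) by rw [hz]; ring] at hcomp
    exact hcomp
  | pred t ih =>
    refine ih.trans ?_
    set z := y + 2*(-t)*(c2-c1) with hz
    have target : HL ((y + 2*(-t-1)*(c2-c1)) :: (y + 2*(-t-1)*(c2-c1)) :: c1 :: c2 :: R)
        (z :: z :: c1 :: c2 :: R) := by
      set w := y + 2*(-t-1)*(c2-c1) with hw
      have h1 := reflL w c1 (c2 :: R)
      have h2 := (slide c1 (2*c1 - w) (c2 :: R)).symm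
      have h3 := ((reflL (2*c1 - w) c2 R).congr_cons c1)
      have h4 := slide c1 (2*c2 - (2*c1 - w)) (c2 :: R)
      have hcomp := ((h1.trans h2).trans h3).trans h4
      rw [show 2*c2 - (2*c1 - w) = z by rw [hw, hz]; ring] at hcomp
      exact hcomp
    exact target.symm

/-- Euclid on a triple: make the first two entries equal -/
lemma triple (n : ℕ) : ∀ (a b c : ℤ) (R : List ℤ), (b - a).natAbs ≤ n →
    ∃ e c', HL (a :: b :: c :: R) (e :: e :: c' :: R) := by
  induction n with
  | zero =>
    intro a b c R h
    refine ⟨a, c, ?_⟩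
    rw [show b = a by omega]
    exact HL.refl _
  | succ n ih =>
    intro a b c R h
    by_cases hp : b - a = 0
    · refine ⟨a, c, ?_⟩
      rw [show b = a by omega]
      exact HL.refl _
    · set p : ℤ := b - a with hpdef
      -- step 1 : A-moves to make q₁ := c - b - t*p ∈ [0, |p|)
      obtain ⟨t, r, hr0, hrP, hrel⟩ :
          ∃ t r : ℤ, 0 ≤ r ∧ r < (p.natAbs : ℤ) ∧ (c - b) - t * p = r := by
        refine ⟨(c-b)/p, (c-b)%p, Int.emod_nonneg _ hp, ?_, ?_⟩
        · have h2 : (c-b) % p < |p| := by have := Int.emod_lt (c-b) hp; rwa [Int.abs_eq_natAbs]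
          rwa [Int.abs_eq_natAbs] at h2
        · have h3 : p * ((c-b)/p) + (c-b)%p = c - b := Int.mul_ediv_add_emod _ _
          linarith [h3, mul_comm p ((c-b)/p)]
      have stepA := moveA t a b (c :: R)
      set a1 := a + t*(b-a) with ha1
      set b1 := b + t*(b-a) with hb1
      have hq1 : c - b1 = r := by rw [hb1]; rw [← hrel, hpdef]; ring
      by_cases hr : r = 0
      · -- c = b1 : slide
        have hc : c = b1 := by omega
        rw [hc] at stepA
        exact ⟨b1, a1, by rw [hc]; exact stepA.trans (slide a1 b1 R)⟩
      · -- step 2 : B-moves to make p₂ := p + s*r ∈ [0, r)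
        obtain ⟨s, p2, hp20, hp2r, hp2rel⟩ : ∃ s p2 : ℤ, 0 ≤ p2 ∧ p2 < r ∧ p + s * r = p2 := by
          refine ⟨-(p/r), p % r, Int.emod_nonneg _ (by omega), Int.emod_lt_of_pos _ (by omega), ?_⟩
          have h3 : r * (p/r) + p % r = p := Int.mul_ediv_add_emod _ _
          linarith [h3, mul_comm r (p/r)]
        have stepB := moveB s a1 b1 c R
        set b2 := b1 + s*(c - b1) with hb2
        set c2 := c + s*(c - b1) with hc2
        have hnewp : b2 - a1 = p2 := by
          rw [hb2, ha1, hq1, ← hp2rel, hpdef]; ring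
        have hrec : (b2 - a1).natAbs ≤ n := by
          rw [hnewp]
          have : (p.natAbs : ℤ) ≤ (n : ℤ) + 1 := by exact_mod_cast h
          omega
        obtain ⟨e, c', hfin⟩ := ih a1 b2 c2 R hrec
        exact ⟨e, c', (stepA.trans stepB).trans hfin⟩

/-- Phase 1 : pair up all but the last two entries -/
lemma phase1 (n : ℕ) : ∀ (l : List ℤ), l.length = 2*n + 2 →
    ∃ us c1 c2, us.length = n ∧ HL l (pairs us ++ [c1, c2]) := by
  induction n with
  | zero =>
    intro l hl
    match l, hl with
    | [c1, c2], _ => exact ⟨[], c1, c2, rfl, by simpa using HL.refl _⟩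
  | succ n ih =>
    intro l hl
    match l, hl with
    | a :: b :: c :: t, hl =>
      obtain ⟨e, c', htri⟩ := triple (b - a).natAbs a b c t le_rfl
      obtain ⟨us, c1, c2, hlen, hrest⟩ := ih (c' :: t) (by simp at hl ⊢; omega)
      refine ⟨e :: us, c1, c2, by simp [hlen], ?_⟩
      refine htri.trans ?_
      have := hrest.congr_cons2 e e
      simpa using this


/-! ### the pair game -/

def PStep (l l' : List ℤ) : Prop :=
  l.Perm l' ∨ ∃ a y t, l = a :: y :: t ∧ l' = a :: (2*a - y) :: t

def PG : List ℤ → List ℤ → Prop := Relation.ReflTransGen PStep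

lemma PG.refl (l : List ℤ) : PG l l := Relation.ReflTransGen.refl

lemma PG.trans {a b c : List ℤ} (h : PG a b) (h' : PG b c) : PG a c :=
  Relation.ReflTransGen.trans h h'

lemma PG.single {l l' : List ℤ} (h : PStep l l') : PG l l' :=
  Relation.ReflTransGen.single h

lemma PG.perm {l l' : List ℤ} (h : l.Perm l') : PG l l' := PG.single (Or.inl h)

lemma PG.reflect (a y : ℤ) (t : List ℤ) : PG (a :: y :: t) (a :: (2*a - y) :: t) :=
  PG.single (Or.inr ⟨a, y, t, rfl, rfl⟩)

/-- permutations of the pair list are realizable -/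
lemma hl_pairs_perm {s s' : List ℤ} (h : s.Perm s') (T : List ℤ) :
    HL (pairs s ++ T) (pairs s' ++ T) := by
  induction h with
  | nil => exact HL.refl _
  | cons x h ih => simpa using (ih.congr_cons2 x x)
  | swap x y l =>
    -- goal : y::y::x::x::Z ~ x::x::y::y::Z
    have s1 : HL (y :: y :: x :: x :: (pairs l ++ T)) (y :: x :: x :: y :: (pairs l ++ T)) :=
      (slide y x (pairs l ++ T)).congr_cons y
    have s2 : HL (y :: x :: x :: y :: (pairs l ++ T)) (x :: x :: y :: y :: (pairs l ++ T)) :=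
      slide y x ((y : ℤ) :: (pairs l ++ T))
    simpa using s1.trans s2
  | trans h1 h2 ih1 ih2 => exact ih1.trans ih2

/-- pair-game moves are realizable on the pair list -/
lemma hl_of_pg {s s' : List ℤ} (h : PG s s') (T : List ℤ) :
    HL (pairs s ++ T) (pairs s' ++ T) := by
  induction h with
  | refl => exact HL.refl _
  | tail hab hbc ih =>
    refine ih.trans ?_
    rcases hbc with hperm | ⟨a, y, t, rfl, rfl⟩
    · exact hl_pairs_perm hperm T
    · have := (reflR a y (pairs t ++ T)).congr_cons a
      simpa using this

/-- translation step in the pair game -/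
lemma pg_step (a b y : ℤ) (R : List ℤ) :
    PG (a :: b :: y :: R) (a :: b :: (y + 2*(a-b)) :: R) := by
  have p1 : (a :: b :: y :: R).Perm (b :: y :: a :: R) := by
    refine (List.Perm.swap a b _).symm.trans ?_
    exact List.Perm.cons b (List.Perm.swap y a R)
  have r1 := PG.reflect b y (a :: R)
  have p2 : (b :: (2*b - y) :: a :: R).Perm (a :: (2*b - y) :: b :: R) := by
    refine (List.Perm.swap (2*b-y) b _).trans ?_
    refine (List.Perm.cons (2*b-y) (List.Perm.swap a b R)).trans ?_
    exact List.Perm.swap a (2*b-y) _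
  have r2 := PG.reflect a (2*b - y) (b :: R)
  have p3 : (a :: (2*a - (2*b - y)) :: b :: R).Perm (a :: b :: (2*a - (2*b-y)) :: R) :=
    List.Perm.cons a (List.Perm.swap b _ R)
  have comp := ((((PG.perm p1).trans r1).trans (PG.perm p2)).trans r2).trans (PG.perm p3)
  have : 2*a - (2*b - y) = y + 2*(a-b) := by ring
  rwa [this] at comp

lemma pg_step' (a b y : ℤ) (R : List ℤ) :
    PG (a :: b :: y :: R) (a :: b :: (y - 2*(a-b)) :: R) := by
  have p1 : (a :: b :: y :: R).Perm (b :: a :: y :: R) := (List.Perm.swap a b _).symm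
  have h := pg_step b a y R
  have p2 : (b :: a :: (y + 2*(b-a)) :: R).Perm (a :: b :: (y + 2*(b-a)) :: R) :=
    List.Perm.swap a b _
  have comp := ((PG.perm p1).trans h).trans (PG.perm p2)
  have : y + 2*(b-a) = y - 2*(a-b) := by ring
  rwa [this] at comp

lemma pg_translate (t : ℤ) (a b y : ℤ) (R : List ℤ) :
    PG (a :: b :: y :: R) (a :: b :: (y + 2*t*(a-b)) :: R) := by
  induction t using Int.induction_on with
  | zero => simpa using PG.refl _
  | succ t ih =>
    refine ih.trans ?_
    have h := pg_step a b (y + 2*t*(a-b)) R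
    have : y + 2*t*(a-b) + 2*(a-b) = y + 2*(t+1)*(a-b) := by ring
    rwa [this] at h
  | pred t ih =>
    refine ih.trans ?_
    have h := pg_step' a b (y + 2*(-t)*(a-b)) R
    have : y + 2*(-t)*(a-b) - 2*(a-b) = y + 2*(-t-1)*(a-b) := by ring
    rwa [this] at h

/-- the ruler phase -/
lemma ruler (G x : ℤ) (hG : G ≠ 0) :
    ∀ (todo done : List ℤ), (∀ u ∈ done, u = x ∨ u = x + G) →
      (∀ u ∈ todo, G ∣ u - x) →
    ∃ done', (∀ u ∈ done', u = x ∨ u = x + G) ∧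
      PG (x :: (x+G) :: (done ++ todo)) (x :: (x+G) :: done') := by
  intro todo
  induction todo with
  | nil =>
    intro done hdone _
    exact ⟨done, hdone, by simpa using PG.refl _⟩
  | cons u todo ih =>
    intro done hdone htodo
    have p1 : (x :: (x+G) :: (done ++ u :: todo)).Perm
        (x :: (x+G) :: u :: (done ++ todo)) :=
      List.Perm.cons x (List.Perm.cons (x+G) List.perm_middle)
    obtain ⟨w, hw⟩ := htodo u (by simp)
    rcases Int.even_or_odd w with ⟨v, hv⟩ | ⟨v, hv⟩
    · -- translate u to x
      have htr := pg_translate v x (x+G) u (done ++ todo)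
      have hval : u + 2*v*(x - (x+G)) = x := by
        have : u = x + G * w := by linarith [hw]
        rw [this, hv]; ring
      rw [hval] at htr
      obtain ⟨done', hd', hpg⟩ := ih (x :: done)
        (by intro z hz; simp only [List.mem_cons] at hz
            rcases hz with rfl | hz
            · left; rfl
            · exact hdone z hz)
        (by intro z hz; exact htodo z (by simp [hz]))
      refine ⟨done', hd', ?_⟩
      exact ((PG.perm p1).trans htr).trans hpg
    · -- translate u to x + G
      have htr := pg_translate v x (x+G) u (done ++ todo)
      have hval : u + 2*v*(x - (x+G)) = x + G := by
        have : u = x + G * w := by linarith [hw]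
        rw [this, hv]; ring
      rw [hval] at htr
      obtain ⟨done', hd', hpg⟩ := ih ((x+G) :: done)
        (by intro z hz; simp only [List.mem_cons] at hz
            rcases hz with rfl | hz
            · right; rfl
            · exact hdone z hz)
        (by intro z hz; exact htodo z (by simp [hz]))
      refine ⟨done', hd', ?_⟩
      exact ((PG.perm p1).trans htr).trans hpg

lemma anchored_pairwise {l : List ℤ} {e a : ℤ} (h : ∀ u ∈ l, e ∣ u - a) :
    ∀ u ∈ l, ∀ w ∈ l, e ∣ u - w := by
  intro u hu w hw
  have h1 := h u hu
  have h2 := h w hw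
  have : u - w = (u - a) - (w - a) := by ring
  rw [this]; exact dvd_sub h1 h2

lemma int_approx (x t : ℤ) (ht : t ≠ 0) :
    ∃ q r : ℤ, x = 2*t*q + r ∧ r.natAbs ≤ t.natAbs := by
  have h1 : 0 ≤ x % (2*(t.natAbs:ℤ)) := Int.emod_nonneg _ (by omega)
  have h2 : x % (2*(t.natAbs:ℤ)) < 2*(t.natAbs:ℤ) := Int.emod_lt_of_pos _ (by omega)
  have h3 : (2*(t.natAbs:ℤ)) * (x / (2*(t.natAbs:ℤ))) + x % (2*(t.natAbs:ℤ)) = x :=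
    Int.mul_ediv_add_emod _ _
  have hN : (t.natAbs:ℤ) = t ∨ (t.natAbs:ℤ) = -t := by omega
  rcases hN with hN | hN
  · rw [hN] at h1 h2 h3
    by_cases hc : x % (2*t) ≤ t
    · refine ⟨x / (2*t), x % (2*t), by linarith [h3], by omega⟩
    · refine ⟨x / (2*t) + 1, x % (2*t) - 2*t, ?_, by omega⟩
      have he : 2*t*(x / (2*t) + 1) = 2*t*(x/(2*t)) + 2*t := by ring
      rw [he]; linarith [h3]
  · rw [hN] at h1 h2 h3
    by_cases hc : x % (2*(-t)) ≤ -t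
    · refine ⟨-(x / (2*(-t))), x % (2*(-t)), ?_, by omega⟩
      have he : 2*t*(-(x / (2*(-t)))) = 2*(-t)*(x/(2*(-t))) := by ring
      rw [he]; linarith [h3]
    · refine ⟨-(x / (2*(-t))) - 1, x % (2*(-t)) - 2*(-t), ?_, by omega⟩
      have he : 2*t*(-(x / (2*(-t))) - 1) = 2*(-t)*(x/(2*(-t))) + 2*(-t) := by ring
      rw [he]; linarith [h3]

/-- the descent: reach a configuration with all values in `{x, x+G}` -/
lemma ruled : ∀ (n : ℕ) (vs : List ℤ) (G : ℤ), G ≠ 0 →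
    (∀ a ∈ vs, ∀ b ∈ vs, G ∣ a - b) →
    (∀ e : ℤ, (∀ a ∈ vs, ∀ b ∈ vs, e ∣ a - b) → e ∣ G) →
    (∃ a ∈ vs, ∃ b ∈ vs, a ≠ b ∧ (a - b).natAbs ≤ n) →
    ∃ x vs', PG vs vs' ∧ (∀ u ∈ vs', u = x ∨ u = x + G) := by
  intro n
  induction n with
  | zero =>
    intro vs G hG hdvd hmax hex
    obtain ⟨a, ha, b, hb, hne, hle⟩ := hex
    exfalso; apply hne; omega
  | succ n ih =>
    intro vs G hG hdvd hmax hex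
    obtain ⟨a, ha, b, hb, hne, hle⟩ := hex
    have hb1 : b ∈ vs.erase a := (List.mem_erase_of_ne (Ne.symm hne)).mpr hb
    have P0 : vs.Perm (a :: b :: (vs.erase a).erase b) :=
      (List.perm_cons_erase ha).trans
        (List.Perm.cons a (List.perm_cons_erase hb1))
    have memof : ∀ u, u ∈ a :: b :: (vs.erase a).erase b ↔ u ∈ vs := fun u => (P0.mem_iff).symm
    set t : ℤ := a - b with htdef
    have ht0 : t ≠ 0 := by omega
    by_cases hall : ∀ c ∈ vs, t ∣ c - a
    · -- ruler case : t = ± G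
      have htG : t ∣ G := hmax t (anchored_pairwise hall)
      have hGt : G ∣ t := hdvd a ha b hb
      have hassoc := Int.associated_iff.mp (associated_of_dvd_dvd htG hGt)
      have hrest : ∀ u ∈ (vs.erase a).erase b, G ∣ u - b := by
        intro u hu
        exact hdvd u ((memof u).mp (by simp [hu])) b hb
      rcases hassoc with hEq | hEq
      · -- t = G : a = b + G, x := b
        obtain ⟨done', hd', hpg⟩ := ruler G b hG ((vs.erase a).erase b) []
          (by intro u hu; simp at hu) hrest
        refine ⟨b, b :: (b + G) :: done', ?_, ?_⟩
        · have hswap : (a :: b :: (vs.erase a).erase b).Perm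
              (b :: (b + G) :: ((vs.erase a).erase b)) := by
            rw [show b + G = a by omega]
            exact List.Perm.swap b a _
          exact ((PG.perm P0).trans (PG.perm hswap)).trans (by simpa using hpg)
        · intro u hu
          simp only [List.mem_cons] at hu
          rcases hu with rfl | rfl | hu
          · left; rfl
          · right; rfl
          · exact hd' u hu
      · -- t = -G : b = a + G, x := a
        have hrest' : ∀ u ∈ (vs.erase a).erase b, G ∣ u - a := by
          intro u hu
          exact hdvd u ((memof u).mp (by simp [hu])) a ha
        obtain ⟨done', hd', hpg⟩ := ruler G a hG ((vs.erase a).erase b) []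
          (by intro u hu; simp at hu) hrest'
        refine ⟨a, a :: (a + G) :: done', ?_, ?_⟩
        · have heq2 : (a :: b :: (vs.erase a).erase b)
              = (a :: (a + G) :: ((vs.erase a).erase b)) := by
            rw [show a + G = b by omega]
          exact (PG.perm P0).trans (by rw [heq2]; simpa using hpg)
        · intro u hu
          simp only [List.mem_cons] at hu
          rcases hu with rfl | rfl | hu
          · left; rfl
          · right; rfl
          · exact hd' u hu
    · -- descent
      push_neg at hall
      obtain ⟨c, hc, hnd⟩ := hall
      have hca : c ≠ a := by
        intro h; apply hnd; rw [h]; simp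
      have hcb : c ≠ b := by
        intro h; apply hnd; rw [h]
        exact ⟨-1, by omega⟩
      have hc2 : c ∈ (vs.erase a).erase b := by
        rw [List.mem_erase_of_ne hcb, List.mem_erase_of_ne hca]; exact hc
      have P1 : vs.Perm (a :: b :: c :: ((vs.erase a).erase b).erase c) :=
        P0.trans (List.Perm.cons a (List.Perm.cons b (List.perm_cons_erase hc2)))
      set rest := ((vs.erase a).erase b).erase c with hrest
      obtain ⟨q, r, hqr, hrle⟩ := int_approx (c - a) t ht0
      -- c' := c - 2*t*q ; c' - a = r
      have htr := pg_translate (-q) a b c rest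
      have hc' : c + 2*(-q)*(a - b) = a + r := by
        rw [← htdef]; linarith [hqr]
      rw [hc'] at htr
      have hndr : ¬ t ∣ r := by
        intro hdr; apply hnd
        rcases hdr with ⟨u, hu⟩
        exact ⟨2*q + u, by rw [hqr, hu]; ring⟩
      have hr0 : r ≠ 0 := by rintro rfl; exact hndr (dvd_zero t)
      have hrne : r.natAbs ≠ t.natAbs := by
        intro hEq
        have : r = t ∨ r = -t := by omega
        rcases this with h | h
        · exact hndr ⟨1, by omega⟩
        · exact hndr ⟨-1, by omega⟩
      have hmem2 : ∀ u, u ∈ a :: b :: c :: rest ↔ u ∈ vs := fun u => (P1.mem_iff).symm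
      have hGt : G ∣ t := hdvd a ha b hb
      have hGr : G ∣ r := by
        have h1 : G ∣ c - a := hdvd c hc a ha
        have h2 : G ∣ 2*t*q := (hGt.mul_left 2).mul_right q
        have : r = (c - a) - 2*t*q := by omega
        rw [this]; exact dvd_sub h1 h2
      have hanch : ∀ u ∈ a :: b :: (a + r) :: rest, G ∣ u - a := by
        intro u hu
        simp only [List.mem_cons] at hu
        rcases hu with h | h | h | hu
        · rw [h]; simp
        · rw [h]; exact hdvd b hb a ha
        · rw [h]; simpa using hGr
        · exact hdvd u ((hmem2 u).mp (by simp [hu])) a ha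
      have hdvd2 : ∀ u ∈ a :: b :: (a + r) :: rest, ∀ w ∈ a :: b :: (a + r) :: rest, G ∣ u - w :=
        anchored_pairwise hanch
      have hmax2 : ∀ e : ℤ, (∀ u ∈ a :: b :: (a + r) :: rest,
          ∀ w ∈ a :: b :: (a + r) :: rest, e ∣ u - w) → e ∣ G := by
        intro e He
        apply hmax
        have hanchE : ∀ u ∈ a :: b :: c :: rest, e ∣ u - a := by
          intro u hu
          have het : e ∣ b - a := He b (by simp) a (by simp)
          have her : e ∣ r := by
            have := He (a + r) (by simp) a (by simp)
            simpa using this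
          simp only [List.mem_cons] at hu
          rcases hu with h | h | h | hu
          · rw [h]; simp
          · rw [h]; exact het
          · rw [h]
            have h5 : c - a = 2*t*q + r := hqr
            rw [h5, htdef]
            refine dvd_add ?_ her
            have h6 : 2*(a-b)*q = (b - a) * (-2*q) := by ring
            rw [h6]; exact het.mul_right _
          · exact He u (by simp [hu]) a (by simp)
        intro u hu w hw
        exact anchored_pairwise hanchE u ((hmem2 u).mpr hu) w ((hmem2 w).mpr hw)
      have hex2 : ∃ u ∈ a :: b :: (a + r) :: rest, ∃ w ∈ a :: b :: (a + r) :: rest,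
          u ≠ w ∧ (u - w).natAbs ≤ n := by
        refine ⟨a, by simp, a + r, by simp, by omega, ?_⟩
        have h1 : t.natAbs ≤ n + 1 := hle
        have h2 : r.natAbs ≤ t.natAbs := hrle
        omega
      obtain ⟨x, vs', hpg2, hvals⟩ := ih (a :: b :: (a + r) :: rest) G hG hdvd2 hmax2 hex2
      exact ⟨x, vs', ((PG.perm P1).trans htr).trans hpg2, hvals⟩

/-- sort a two-valued list -/
lemma sort2 : ∀ (l : List ℤ) (x y : ℤ), (∀ u ∈ l, u = x ∨ u = y) →
    ∃ A B, l.Perm (List.replicate A x ++ List.replicate B y) := by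
  intro l
  induction l with
  | nil => exact fun x y _ => ⟨0, 0, by simp⟩
  | cons u l ih =>
    intro x y h
    obtain ⟨A, B, hAB⟩ := ih x y (fun v hv => h v (by simp [hv]))
    rcases h u (by simp) with rfl | rfl
    · exact ⟨A + 1, B, by
        rw [List.replicate_succ]
        simpa using hAB.cons u⟩
    · refine ⟨A, B + 1, ?_⟩
      rw [List.replicate_succ]
      exact (hAB.cons u).trans List.perm_middle.symm


/-! ### bridges between lists and vectors -/

lemma DeltaL_ofFn {m : ℕ} (v : Fin m → ℤ) : DeltaL (List.ofFn v) = Delta v := by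
  unfold Delta
  induction m with
  | zero => simp
  | succ n ih =>
    rw [Fin.sum_univ_succ, List.ofFn_succ, DeltaL_cons, ih (fun i => v i.succ)]
    simp only [Fin.val_zero, pow_zero, one_mul, Fin.val_succ, pow_succ]
    have : ∀ i : Fin n, (-1:ℤ)^(i:ℕ) * (-1) * v i.succ = -((-1:ℤ)^(i:ℕ) * v i.succ) := by
      intro i; ring
    rw [Finset.sum_congr rfl (fun i _ => this i), Finset.sum_neg_distrib]
    ring

lemma lvec_ofFn {m : ℕ} (v : Fin m → ℤ) (h : (List.ofFn v).length = m) :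
    (fun i : Fin m => (List.ofFn v).get (Fin.cast h.symm i)) = v := by
  funext j
  rw [List.get_eq_getElem]
  simp only [Fin.coe_cast, List.getElem_ofFn]

/-- the key step computation -/
lemma hur_step (xs : List ℤ) (a b : ℤ) (ys : List ℤ) (m : ℕ)
    (h : (xs ++ a :: b :: ys).length = m) (h' : (xs ++ b :: (2*b - a) :: ys).length = m) :
    (fun i : Fin m => (xs ++ b :: (2*b - a) :: ys).get (Fin.cast h'.symm i))
      = sigmaAct ⟨xs.length, by simp at h; omega⟩
          (fun i : Fin m => (xs ++ a :: b :: ys).get (Fin.cast h.symm i)) := by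
  have hm : xs.length + 2 + ys.length = m := by simp at h; omega
  have Gle : ∀ (c d : ℤ) (n : ℕ) (hn : n < xs.length),
      (xs ++ c :: d :: ys)[n]'(by simp; omega) = xs[n] := by
    intro c d n hn
    exact List.getElem_append_left hn
  have G0 : ∀ (c d : ℤ), (xs ++ c :: d :: ys)[xs.length]'(by simp) = c := by
    intro c d
    rw [List.getElem_append_right le_rfl]
    simp
  have G1 : ∀ (c d : ℤ), (xs ++ c :: d :: ys)[xs.length + 1]'(by simp) = d := by
    intro c d
    rw [List.getElem_append_right (by omega)]
    simp only [show xs.length + 1 - xs.length = 1 from by omega]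
    rfl
  have GR : ∀ (c d : ℤ) (n : ℕ) (hn : xs.length + 2 ≤ n) (hn2 : n < m),
      (xs ++ c :: d :: ys)[n]'(by simp; omega) = ys[n - xs.length - 2]'(by omega) := by
    intro c d n hn hn2
    rw [List.getElem_append_right (by omega)]
    rw [List.getElem_cons (by simp; omega)]
    rw [dif_neg (by omega)]
    rw [List.getElem_cons (by simp; omega)]
    rw [dif_neg (by omega)]
    simp only [show n - xs.length - 1 - 1 = n - xs.length - 2 from by omega]
  funext j
  simp only [sigmaAct, List.get_eq_getElem, Fin.coe_cast]
  by_cases h1 : (j : ℕ) = xs.length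
  · rw [if_pos h1]
    simp only [h1]
    rw [G0, G1]
  · rw [if_neg h1]
    by_cases h2 : (j : ℕ) = xs.length + 1
    · rw [if_pos h2]
      simp only [h2]
      rw [G1, G1, G0]
    · rw [if_neg h2]
      by_cases h3 : (j : ℕ) < xs.length
      · rw [Gle _ _ _ h3, Gle _ _ _ h3]
      · rw [GR _ _ _ (by omega) (by omega), GR _ _ _ (by omega) (by omega)]

lemma hur_of_hl {l l' : List ℤ} (hl : HL l l') :
    ∀ (m : ℕ) (h : l.length = m) (h' : l'.length = m),
    HurwitzEquiv (fun i : Fin m => l.get (Fin.cast h.symm i))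
      (fun i : Fin m => l'.get (Fin.cast h'.symm i)) := by
  induction hl with
  | rel x y hxy =>
    intro m h h'
    obtain ⟨xs, a, b, ys, rfl, rfl⟩ := hxy
    exact Relation.EqvGen.rel _ _ ⟨⟨xs.length, by simp at h; omega⟩, hur_step xs a b ys m h h'⟩
  | refl x =>
    intro m h h'
    exact Relation.EqvGen.refl _
  | symm x y hxy ih =>
    intro m h h'
    exact Relation.EqvGen.symm _ _ (ih m h' h)
  | trans x y z hxy hyz ih ih' =>
    intro m h h'
    have h2 : y.length = m := by rw [← HL.length hxy]; exact h
    exact Relation.EqvGen.trans _ _ _ (ih m h h2) (ih' m h2 h')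

lemma sigma_eval {m : ℕ} (i : Fin (m - 1)) (v : Fin m → ℤ) (j : Fin m) :
    sigmaAct i v j
      = if (j : ℕ) = (i : ℕ) then v ⟨(i : ℕ) + 1, by have := i.isLt; omega⟩
        else if (j : ℕ) = (i : ℕ) + 1 then
          2 * v ⟨(i : ℕ) + 1, by have := i.isLt; omega⟩ - v ⟨(i : ℕ), by have := i.isLt; omega⟩
        else v j := rfl

lemma Delta_sigma {m : ℕ} (i : Fin (m - 1)) (v : Fin m → ℤ) :
    Delta (sigmaAct i v) = Delta v := by
  have hi : (i : ℕ) < m - 1 := i.isLt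
  have hIa : (i : ℕ) < m := by omega
  have hIb : (i : ℕ) + 1 < m := by omega
  have hne : (⟨(i:ℕ), hIa⟩ : Fin m) ≠ ⟨(i:ℕ)+1, hIb⟩ := by
    simp [Fin.ext_iff]
  have hzero : ∀ j ∈ Finset.univ,
      j ∉ ({(⟨(i:ℕ), hIa⟩ : Fin m), ⟨(i:ℕ)+1, hIb⟩} : Finset (Fin m)) →
      (-1:ℤ)^(j:ℕ) * sigmaAct i v j - (-1:ℤ)^(j:ℕ) * v j = 0 := by
    intro j _ hj
    simp only [Finset.mem_insert, Finset.mem_singleton] at hj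
    push_neg at hj
    obtain ⟨hj1, hj2⟩ := hj
    rw [sigma_eval, if_neg (fun hc => hj1 (Fin.ext hc)), if_neg (fun hc => hj2 (Fin.ext hc))]
    ring
  have hsum : ∑ j : Fin m, ((-1:ℤ)^(j:ℕ) * sigmaAct i v j - (-1:ℤ)^(j:ℕ) * v j) = 0 := by
    rw [← Finset.sum_subset (Finset.subset_univ {(⟨(i:ℕ), hIa⟩ : Fin m), ⟨(i:ℕ)+1, hIb⟩}) hzero]
    rw [Finset.sum_pair hne]
    rw [sigma_eval, sigma_eval]
    rw [if_pos rfl, if_neg (by simp), if_pos rfl]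
    simp only [pow_succ]
    ring
  rw [Finset.sum_sub_distrib] at hsum
  unfold Delta
  omega

lemma sigma_dvd {m : ℕ} (i : Fin (m - 1)) (v : Fin m → ℤ) (e : ℤ) :
    (∀ p q : Fin m, e ∣ v p - v q) ↔ (∀ p q : Fin m, e ∣ sigmaAct i v p - sigmaAct i v q) := by
  have hi : (i : ℕ) < m - 1 := i.isLt
  have hIa : (i : ℕ) < m := by omega
  have hIb : (i : ℕ) + 1 < m := by omega
  constructor
  · intro h
    have key : ∀ j, e ∣ sigmaAct i v j - v ⟨(i:ℕ), hIa⟩ := by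
      intro j
      rw [sigma_eval]
      split_ifs with h1 h2
      · exact h _ _
      · have : 2 * v ⟨(i:ℕ)+1, by omega⟩ - v ⟨(i:ℕ), by omega⟩ - v ⟨(i:ℕ), hIa⟩
            = 2 * (v ⟨(i:ℕ)+1, hIb⟩ - v ⟨(i:ℕ), hIa⟩) := by ring
        rw [this]
        exact (h _ _).mul_left 2
      · exact h _ _
    intro p q
    have : sigmaAct i v p - sigmaAct i v q
        = (sigmaAct i v p - v ⟨(i:ℕ), hIa⟩) - (sigmaAct i v q - v ⟨(i:ℕ), hIa⟩) := by ring
    rw [this]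
    exact dvd_sub (key p) (key q)
  · intro h
    have hsI : sigmaAct i v ⟨(i:ℕ), hIa⟩ = v ⟨(i:ℕ)+1, hIb⟩ := by
      rw [sigma_eval, if_pos rfl]
    have hsI' : sigmaAct i v ⟨(i:ℕ)+1, hIb⟩ = 2 * v ⟨(i:ℕ)+1, hIb⟩ - v ⟨(i:ℕ), hIa⟩ := by
      rw [sigma_eval, if_neg (by simp), if_pos rfl]
    have key : ∀ j, e ∣ v j - v ⟨(i:ℕ)+1, hIb⟩ := by
      intro j
      by_cases h1 : (j:ℕ) = (i:ℕ)
      · have hj : j = ⟨(i:ℕ), hIa⟩ := by rw [Fin.ext_iff]; simpa using h1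
        rw [hj]
        have := h ⟨(i:ℕ)+1, hIb⟩ ⟨(i:ℕ), hIa⟩
        rw [hsI, hsI'] at this
        have h2 : 2 * v ⟨(i:ℕ)+1, hIb⟩ - v ⟨(i:ℕ), hIa⟩ - v ⟨(i:ℕ)+1, hIb⟩
            = -(v ⟨(i:ℕ), hIa⟩ - v ⟨(i:ℕ)+1, hIb⟩) := by ring
        rw [h2] at this
        exact (dvd_neg.mp this)
      · by_cases h2 : (j:ℕ) = (i:ℕ)+1
        · have hj : j = ⟨(i:ℕ)+1, hIb⟩ := by rw [Fin.ext_iff]; simpa using h2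
          rw [hj]; simp
        · have hvj : sigmaAct i v j = v j := by
            rw [sigma_eval, if_neg h1, if_neg h2]
          have := h j ⟨(i:ℕ), hIa⟩
          rw [hvj, hsI] at this
          exact this
    intro p q
    have : v p - v q = (v p - v ⟨(i:ℕ)+1, hIb⟩) - (v q - v ⟨(i:ℕ)+1, hIb⟩) := by ring
    rw [this]
    exact dvd_sub (key p) (key q)

lemma dgcd_dvd {m : ℕ} (v : Fin m → ℤ) (i j : Fin m) : dgcd v ∣ v i - v j :=
  Finset.gcd_dvd (Finset.mem_univ ((i, j) : Fin m × Fin m))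

lemma dvd_dgcd {m : ℕ} (v : Fin m → ℤ) (e : ℤ) (h : ∀ i j, e ∣ v i - v j) : e ∣ dgcd v :=
  Finset.dvd_gcd (fun p _ => h p.1 p.2)

lemma dgcd_eq_of_iff {m : ℕ} {v w : Fin m → ℤ}
    (h : ∀ e : ℤ, (∀ i j, e ∣ v i - v j) ↔ (∀ i j, e ∣ w i - w j)) : dgcd v = dgcd w := by
  refine dvd_antisymm_of_normalize_eq Finset.normalize_gcd Finset.normalize_gcd ?_ ?_
  · exact dvd_dgcd w _ ((h _).mp (fun i j => dgcd_dvd v i j))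
  · exact dvd_dgcd v _ ((h _).mpr (fun i j => dgcd_dvd w i j))

/-- invariance of Δ and d under Hurwitz equivalence -/
lemma hur_invariants {m : ℕ} {v w : Fin m → ℤ} (h : HurwitzEquiv v w) :
    Delta v = Delta w ∧ dgcd v = dgcd w := by
  induction h with
  | rel x y hxy =>
    obtain ⟨i, rfl⟩ := hxy
    refine ⟨(Delta_sigma i x).symm, ?_⟩
    exact dgcd_eq_of_iff (fun e => sigma_dvd i x e)
  | refl x => exact ⟨rfl, rfl⟩
  | symm x y _ ih => exact ⟨ih.1.symm, ih.2.symm⟩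
  | trans x y z _ _ ih ih' => exact ⟨ih.1.trans ih'.1, ih.2.trans ih'.2⟩


/-! ### putting everything together -/

lemma DeltaL_pairs (s : List ℤ) : DeltaL (pairs s) = 0 := by
  have := DeltaL_pairs_append s []
  simpa using this

lemma div_ofFn_iff {m : ℕ} (v : Fin m → ℤ) (e : ℤ) :
    (∀ a ∈ List.ofFn v, ∀ b ∈ List.ofFn v, e ∣ a - b) ↔ ∀ i j, e ∣ v i - v j := by
  constructor
  · intro h i j
    exact h _ (List.mem_ofFn.mpr ⟨i, rfl⟩) _ (List.mem_ofFn.mpr ⟨j, rfl⟩)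
  · intro h a ha b hb
    obtain ⟨i, rfl⟩ := List.mem_ofFn.mp ha
    obtain ⟨j, rfl⟩ := List.mem_ofFn.mp hb
    exact h i j

lemma ofFn_blocks (k p : ℕ) (x y : ℤ) (hp : p ≤ 2*k) :
    List.ofFn (fun j : Fin (2*k) => if (j:ℕ) < p then x else y)
      = List.replicate p x ++ List.replicate (2*k - p) y := by
  apply List.ext_getElem
  · simp; omega
  · intro n h1 h2
    simp only [List.getElem_ofFn]
    by_cases hn : n < p
    · rw [if_pos hn, List.getElem_append_left (by simp [hn]), List.getElem_replicate]
    · rw [if_neg hn, List.getElem_append_right (by simp; omega), List.getElem_replicate]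

lemma DeltaL_blocks_even {p q : ℕ} (x y : ℤ) (hp : Even p) (hq : Even q) :
    DeltaL (List.replicate p x ++ List.replicate q y) = 0 := by
  obtain ⟨A, hA⟩ := hp
  obtain ⟨B, hB⟩ := hq
  rw [show p = 2*A by omega, show q = 2*B by omega, ← pairs_replicate, ← pairs_replicate]
  rw [DeltaL_pairs_append, DeltaL_pairs]

lemma DeltaL_blocks_odd {p q : ℕ} (x y : ℤ) (hp : Odd p) (hq : Odd q) :
    DeltaL (List.replicate p x ++ List.replicate q y) = x - y := by
  obtain ⟨A, hA⟩ := hp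
  obtain ⟨B, hB⟩ := hq
  rw [show p = 2*A+1 by omega, show q = 2*B+1 by omega]
  rw [List.replicate_succ' (n := 2*A) (a := x), List.replicate_succ]
  rw [← pairs_replicate, ← pairs_replicate]
  rw [List.append_assoc, DeltaL_pairs_append]
  simp only [List.singleton_append, DeltaL_cons, DeltaL_pairs]
  ring

/-- Delta of a block vector -/
lemma Delta_blocks (k p : ℕ) (x y : ℤ) (hp : p ≤ 2*k) :
    Delta (fun j : Fin (2*k) => if (j:ℕ) < p then x else y)
      = DeltaL (List.replicate p x ++ List.replicate (2*k - p) y) := by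
  rw [← DeltaL_ofFn, ofFn_blocks k p x y hp]

/-- transfer an `HL` reduction ending in a block list back to vectors -/
lemma hur_blocks_of_hl {k : ℕ} (v : Fin (2*k) → ℤ) (p : ℕ) (x y : ℤ) (hp : p ≤ 2*k)
    (h : HL (List.ofFn v) (List.replicate p x ++ List.replicate (2*k - p) y)) :
    HurwitzEquiv v (fun j : Fin (2*k) => if (j:ℕ) < p then x else y) := by
  have hlen : (List.ofFn v).length = 2*k := by simp
  have hlen' : (List.replicate p x ++ List.replicate (2*k-p) y).length = 2*k := by simp; omega
  have := hur_of_hl h (2*k) hlen hlen'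
  rw [lvec_ofFn v hlen] at this
  have hfun : (fun i : Fin (2*k) =>
      (List.replicate p x ++ List.replicate (2*k-p) y).get (Fin.cast hlen'.symm i))
      = fun j : Fin (2*k) => if (j:ℕ) < p then x else y := by
    funext j
    rw [List.get_eq_getElem]
    simp only [Fin.coe_cast]
    by_cases hj : (j:ℕ) < p
    · rw [List.getElem_append_left (by simp [hj]), List.getElem_replicate, if_pos hj]
    · rw [List.getElem_append_right (by simp; omega), List.getElem_replicate, if_neg hj]
  rwa [hfun] at this

/-- normalization of the pairs when the two singles differ -/
lemma normalizePairs (c1 c2 : ℤ) :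
    ∀ (todo done : List ℤ),
      (∀ u ∈ todo, (2*(c2 - c1)) ∣ (u - c1) ∨ (2*(c2 - c1)) ∣ (u - c2)) →
      (∀ u ∈ done, u = c1 ∨ u = c2) →
      ∃ done', (∀ u ∈ done', u = c1 ∨ u = c2) ∧
        done'.length = done.length + todo.length ∧
        HL (pairs (done ++ todo) ++ [c1, c2]) (pairs done' ++ [c1, c2]) := by
  intro todo
  induction todo with
  | nil =>
    intro done _ hdone
    exact ⟨done, hdone, by simp, by simp [HL.refl]⟩
  | cons u todo ih =>
    intro done hcond hdone
    -- move u to the end, next to the singles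
    have hperm1 : (done ++ u :: todo).Perm ((done ++ todo) ++ [u]) :=
      List.perm_middle.trans (List.perm_append_singleton u (done ++ todo)).symm
    have step1 := hl_pairs_perm hperm1 ([c1, c2])
    -- translate u onto c1 or c2
    obtain ⟨u', hu', htr⟩ : ∃ u', (u' = c1 ∨ u' = c2) ∧
        HL (u :: u :: c1 :: c2 :: ([]:List ℤ)) (u' :: u' :: c1 :: c2 :: ([]:List ℤ)) := by
      rcases hcond u (by simp) with ⟨s, hs⟩ | ⟨s, hs⟩
      · refine ⟨c1, Or.inl rfl, ?_⟩
        have h := translatePair (-s) u c1 c2 []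
        have : u + 2*(-s)*(c2 - c1) = c1 := by linarith [hs]
        rwa [this] at h
      · refine ⟨c2, Or.inr rfl, ?_⟩
        have h := translatePair (-s) u c1 c2 []
        have : u + 2*(-s)*(c2 - c1) = c2 := by linarith [hs]
        rwa [this] at h
    have step2 : HL (pairs ((done ++ todo) ++ [u]) ++ [c1, c2])
        (pairs ((done ++ todo) ++ [u']) ++ [c1, c2]) := by
      refine HL.cast (htr.congr_pre (pairs (done ++ todo))) ?_ ?_ <;>
        simp [pairs_append]
    have hperm2 : ((done ++ todo) ++ [u']).Perm ((u' :: done) ++ todo) := by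
      refine (List.perm_append_singleton u' (done ++ todo)).trans ?_
      simp
    have step3 := hl_pairs_perm hperm2 ([c1, c2])
    obtain ⟨done', hd', hlen', hrec⟩ := ih (u' :: done)
      (fun w hw => hcond w (by simp [hw]))
      (by intro w hw
          simp only [List.mem_cons] at hw
          rcases hw with rfl | hw
          · exact hu'
          · exact hdone w hw)
    refine ⟨done', hd', by simp at hlen' ⊢; omega, ?_⟩
    exact ((step1.trans step2).trans step3).trans hrec

/-- final assembly in the odd case -/
lemma assemble_odd (c1 c2 : ℤ) (A B : ℕ) :
    HL (pairs (List.replicate A c1 ++ List.replicate B c2) ++ [c1, c2])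
       (List.replicate (2*A+1) c1 ++ List.replicate (2*B+1) c2) := by
  rw [pairs_append, pairs_replicate, pairs_replicate, List.append_assoc]
  have h := (slideBlock (List.replicate B c2) c1 c2 []).congr_pre (List.replicate (2*A) c1)
  refine HL.cast h (by rw [pairs_replicate]) ?_
  rw [pairs_replicate]
  rw [show (2*A+1) = (2*A)+1 from rfl, List.replicate_succ' (n := 2*A) (a := c1)]
  rw [show (2*B+1) = (2*B)+1 from rfl, List.replicate_succ]
  simp

/-- the Δ = 0 construction -/
lemma construct_zero {k : ℕ} (hk : 2 ≤ k) (v : Fin (2*k) → ℤ) (h0 : Delta v = 0) :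
    ∃ (x y : ℤ) (p : ℕ), p ≤ 2*k ∧ Even p ∧ Even (2*k - p) ∧
      HurwitzEquiv v (fun j : Fin (2*k) => if (j:ℕ) < p then x else y) := by
  have hlen0 : (List.ofFn v).length = 2*(k-1) + 2 := by simp; omega
  obtain ⟨us, c1, c2, hus, hHL⟩ := phase1 (k-1) (List.ofFn v) hlen0
  have hΔ : c1 - c2 = 0 := by
    have h1 := hHL.deltaL
    rw [DeltaL_ofFn, DeltaL_pairs_append] at h1
    simp at h1
    omega
  have hc : c1 = c2 := by omega
  subst hc
  set vs : List ℤ := us ++ [c1] with hvs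
  have hkey : pairs us ++ [c1, c1] = pairs vs := by
    rw [hvs, pairs_append]; rfl
  rw [hkey] at hHL
  have hmemvs : ∀ a, a ∈ pairs vs ↔ a ∈ vs := fun a => mem_pairs a vs
  -- dictionary for divisibility
  have hdict : ∀ e : ℤ, (∀ a ∈ vs, ∀ b ∈ vs, e ∣ a - b) ↔ (∀ i j, e ∣ v i - v j) := by
    intro e
    constructor
    · intro h
      rw [← div_ofFn_iff v e]
      rw [hHL.dvd_iff e]
      intro a ha b hb
      exact h a ((hmemvs a).mp ha) b ((hmemvs b).mp hb)
    · intro h a ha b hb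
      have h2 := (hHL.dvd_iff e).mp ((div_ofFn_iff v e).mpr h)
      exact h2 a ((hmemvs a).mpr ha) b ((hmemvs b).mpr hb)
  by_cases hconst : ∀ u ∈ vs, u = c1
  · -- all entries equal
    have hrep : vs = List.replicate vs.length c1 := List.eq_replicate_of_mem hconst
    have hlvs : vs.length = k := by simp [hvs]; omega
    refine ⟨c1, c1, 2*k, le_rfl, ⟨k, by ring⟩, by simp, ?_⟩
    apply hur_blocks_of_hl v (2*k) c1 c1 le_rfl
    have : pairs vs = List.replicate (2*k) c1 ++ List.replicate (2*k - 2*k) c1 := by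
      rw [hrep, hlvs, pairs_replicate]; simp
    rw [← this]
    exact hHL
  · push_neg at hconst
    obtain ⟨u, hu, hune⟩ := hconst
    set G := dgcd v with hG
    have hGvs : ∀ a ∈ vs, ∀ b ∈ vs, G ∣ a - b := by
      intro a ha b hb
      exact (hdict G).mpr (fun i j => dgcd_dvd v i j) a ha b hb
    have hGne : G ≠ 0 := by
      intro hG0
      apply hune
      have := hGvs u hu c1 (by simp [hvs])
      rw [hG0] at this
      omega
    have hGmax : ∀ e : ℤ, (∀ a ∈ vs, ∀ b ∈ vs, e ∣ a - b) → e ∣ G := by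
      intro e he
      exact dvd_dgcd v e ((hdict e).mp he)
    obtain ⟨x, vs', hPG, hvals⟩ := ruled (u - c1).natAbs vs G hGne hGvs hGmax
      ⟨u, hu, c1, by simp [hvs], hune, le_rfl⟩
    obtain ⟨A, B, hperm⟩ := sort2 vs' x (x + G) hvals
    have step1 : HL (pairs vs) (pairs vs') := by
      have := hl_of_pg hPG ([] : List ℤ)
      simpa using this
    have step2 : HL (pairs vs') (pairs (List.replicate A x ++ List.replicate B (x+G))) := by
      have := hl_pairs_perm hperm ([] : List ℤ)
      simpa using this
    have hfin : HL (List.ofFn v)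
        (List.replicate (2*A) x ++ List.replicate (2*B) (x+G)) := by
      have := (hHL.trans step1).trans step2
      rwa [pairs_append, pairs_replicate, pairs_replicate] at this
    have hlen : 2*A + 2*B = 2*k := by
      have := hfin.length
      simp at this
      omega
    refine ⟨x, x + G, 2*A, by omega, ⟨A, by ring⟩, ⟨B, by omega⟩, ?_⟩
    apply hur_blocks_of_hl v (2*A) x (x+G) (by omega)
    rw [show 2*k - 2*A = 2*B by omega]
    exact hfin

/-- the Δ = ±d ≠ 0 construction -/
lemma construct_pm {k : ℕ} (hk : 2 ≤ k) (v : Fin (2*k) → ℤ)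
    (hpm : Delta v = dgcd v ∨ Delta v = -dgcd v) (hne : dgcd v ≠ 0) :
    ∃ (x y : ℤ) (p : ℕ), p ≤ 2*k ∧
      HurwitzEquiv v (fun j : Fin (2*k) => if (j:ℕ) < p then x else y) := by
  have hlen0 : (List.ofFn v).length = 2*(k-1) + 2 := by simp; omega
  obtain ⟨us, c1, c2, hus, hHL⟩ := phase1 (k-1) (List.ofFn v) hlen0
  have hΔ : c1 - c2 = Delta v := by
    have h1 := hHL.deltaL
    rw [DeltaL_ofFn, DeltaL_pairs_append] at h1
    simp at h1
    omega
  set G := dgcd v with hG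
  have hmem : ∀ a, a ∈ pairs us ++ [c1, c2] ↔ (a ∈ us ∨ a = c1 ∨ a = c2) := by
    intro a
    simp [mem_pairs]
  have hdict : ∀ e : ℤ, (∀ a ∈ pairs us ++ [c1,c2], ∀ b ∈ pairs us ++ [c1,c2], e ∣ a - b)
      ↔ (∀ i j, e ∣ v i - v j) := by
    intro e
    rw [← div_ofFn_iff v e, hHL.dvd_iff e]
  have hGall : ∀ a ∈ pairs us ++ [c1,c2], ∀ b ∈ pairs us ++ [c1,c2], G ∣ a - b :=
    (hdict G).mpr (fun i j => dgcd_dvd v i j)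
  -- the two singles differ by ±G
  have hd12 : c1 - c2 = G ∨ c1 - c2 = -G := by
    rcases hpm with h | h
    · left; omega
    · right; omega
  -- each pair value is congruent to c1 or c2 mod 2(c2-c1)
  have hcond : ∀ u ∈ us, (2*(c2 - c1)) ∣ (u - c1) ∨ (2*(c2 - c1)) ∣ (u - c2) := by
    intro u hu
    have h1 : G ∣ u - c1 := hGall u ((hmem u).mpr (Or.inl hu)) c1 ((hmem c1).mpr (by simp))
    have hD : (c2 - c1) ∣ u - c1 := by
      rcases hd12 with h | h
      · rw [show c2 - c1 = -G by omega]
        exact (neg_dvd.mpr h1)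
      · rw [show c2 - c1 = G by omega]
        exact h1
    obtain ⟨w, hw⟩ := hD
    rcases Int.even_or_odd w with ⟨s, hs⟩ | ⟨s, hs⟩
    · left
      exact ⟨s, by rw [hw, hs]; ring⟩
    · right
      refine ⟨s, ?_⟩
      have : u - c2 = (u - c1) - (c2 - c1) := by ring
      rw [this, hw, hs]; ring
  obtain ⟨done', hd', hlen', hHL2⟩ := normalizePairs c1 c2 us [] hcond (by simp)
  obtain ⟨A, B, hperm⟩ := sort2 done' c1 c2 hd'
  have step1 : HL (pairs done' ++ [c1,c2])
      (pairs (List.replicate A c1 ++ List.replicate B c2) ++ [c1,c2]) :=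
    hl_pairs_perm hperm [c1, c2]
  have hfin : HL (List.ofFn v)
      (List.replicate (2*A+1) c1 ++ List.replicate (2*B+1) c2) := by
    refine ((hHL.trans (by simpa using hHL2)).trans step1).trans ?_
    exact assemble_odd c1 c2 A B
  have hlen : (2*A+1) + (2*B+1) = 2*k := by
    have := hfin.length
    simp at this
    omega
  refine ⟨c1, c2, 2*A+1, by omega, ?_⟩
  apply hur_blocks_of_hl v (2*A+1) c1 c2 (by omega)
  rw [show 2*k - (2*A+1) = 2*B+1 by omega]
  exact hfin


set_option maxHeartbeats 1000000 in
/-- forward direction computations for a block vector -/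
lemma forward_dir {k : ℕ} (v : Fin (2*k) → ℤ) (x y : ℤ) (p : ℕ) (hp : p ≤ 2*k)
    (heq : HurwitzEquiv v (fun j : Fin (2*k) => if (j : ℕ) < p then x else y)) :
    (Even p → Delta v = 0) ∧
    (Delta v = 0 ∨ Delta v = dgcd v ∨ Delta v = -dgcd v) := by
  obtain ⟨hΔ, hGv⟩ := hur_invariants heq
  rcases Nat.even_or_odd p with hpe | hpo
  · have hz : Delta v = 0 := by
      rw [hΔ, Delta_blocks k p x y hp]
      obtain ⟨A, hA⟩ := hpe
      exact DeltaL_blocks_even x y ⟨A, hA⟩ ⟨k - A, by omega⟩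
    exact ⟨fun _ => hz, Or.inl hz⟩
  · obtain ⟨A, hA⟩ := hpo
    have hplt : p < 2*k := by omega
    have hΔB : Delta v = x - y := by
      rw [hΔ, Delta_blocks k p x y hp]
      exact DeltaL_blocks_odd x y ⟨A, hA⟩ ⟨k - A - 1, by omega⟩
    constructor
    · intro hpe
      obtain ⟨C, hC⟩ := hpe
      omega
    right
    have h1 : dgcd (fun j : Fin (2*k) => if (j : ℕ) < p then x else y) ∣ x - y := by
      have h := dgcd_dvd (fun j : Fin (2*k) => if (j : ℕ) < p then x else y)
        ⟨p-1, by omega⟩ ⟨p, by omega⟩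
      have hc1 : ((⟨p-1, by omega⟩ : Fin (2*k)) : ℕ) < p := by
        show p - 1 < p; omega
      have hc2 : ¬ ((⟨p, by omega⟩ : Fin (2*k)) : ℕ) < p := by
        show ¬ (p < p); omega
      rw [if_pos hc1, if_neg hc2] at h
      exact h
    have h2 : (x - y) ∣ dgcd (fun j : Fin (2*k) => if (j : ℕ) < p then x else y) := by
      refine dvd_dgcd _ _ (fun i j => ?_)
      split_ifs
      · exact ⟨0, by ring⟩
      · exact ⟨1, by ring⟩
      · exact ⟨-1, by ring⟩
      · exact ⟨0, by ring⟩
    rcases Int.associated_iff.mp (associated_of_dvd_dvd h1 h2) with hE | hE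
    · left; rw [hΔB, hGv, hE]
    · right; rw [hΔB, hGv, hE]; ring

end S12

/-- `v ∈ ℤ^{2k}` is Hurwitz equivalent to a vector of the form
`(x,…,x,y,…,y)` iff `Δ(v) ∈ {0, ±d(v)}`; it is equivalent to such a vector with
both blocks of even length iff `Δ(v) = 0`. -/
theorem stmt_12 (k : ℕ) (hk : 2 ≤ k) (v : Fin (2 * k) → ℤ) :
    ((∃ (x y : ℤ) (p : ℕ), p ≤ 2 * k ∧
        HurwitzEquiv v (fun j => if (j : ℕ) < p then x else y)) ↔
      (Delta v = 0 ∨ Delta v = dgcd v ∨ Delta v = -dgcd v)) ∧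
    ((∃ (x y : ℤ) (p : ℕ), p ≤ 2 * k ∧ Even p ∧ Even (2 * k - p) ∧
        HurwitzEquiv v (fun j => if (j : ℕ) < p then x else y)) ↔
      Delta v = 0) := by
  constructor
  · constructor
    · rintro ⟨x, y, p, hp, heq⟩
      exact (S12.forward_dir v x y p hp heq).2
    · intro h
      by_cases h0 : Delta v = 0
      · obtain ⟨x, y, p, hp, _, _, heq⟩ := S12.construct_zero hk v h0
        exact ⟨x, y, p, hp, heq⟩
      · have hpm : Delta v = dgcd v ∨ Delta v = -dgcd v := by tauto
        have hne : dgcd v ≠ 0 := by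
          intro hz
          rw [hz] at hpm
          simp at hpm
          exact h0 hpm
        exact S12.construct_pm hk v hpm hne
  · constructor
    · rintro ⟨x, y, p, hp, hpe, _, heq⟩
      exact (S12.forward_dir v x y p hp heq).1 hpe
    · intro h0
      exact S12.construct_zero hk v h0
end
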